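/- arXiv:1202.3312 — 2 statements merged into one kernel-verified Lean document; each statement's English description precedes it below -/
import Mathlib

section
/- Let H be a Hopf algebra over a field k and A a left H-comodule algebra. If H coacts on A cocommutatively, i.e. for all a ∈ A and b̃ ∈ A^⊗n one has b̃₍₋₁₎ a₍₋₁₎⁽¹⁾ ⊗ a₍₋₁₎⁽²⁾ ⊗ a₍₀₎ ⊗ b̃₍₀₎ = a₍₋₁₎⁽²⁾ b̃₍₋₁₎ ⊗ a₍₋₁₎⁽¹⁾ ⊗ a₍₀₎ ⊗ b̃₍₀₎, then any right H-module M, endowed with the trivial left H-coaction m ↦ 1 ⊗ m, is an ^A H-HCC; in particular the cyclic operator τₙ preserves H-colinearity and the operators δᵢ, σᵢ, τₙ make Hom^H(A^⊗(n+1), M) a cocyclic module. -/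
open TensorProduct LinearMap

noncomputable section
namespace HCN

variable (k : Type) [Field k]

section Shortcuts
variable (X Y Z W : Type) [AddCommGroup X] [Module k X] [AddCommGroup Y] [Module k Y]
  [AddCommGroup Z] [Module k Z] [AddCommGroup W] [Module k W]
abbrev cmm : X ⊗[k] Y →ₗ[k] Y ⊗[k] X := (TensorProduct.comm k X Y).toLinearMap
abbrev asc : (X ⊗[k] Y) ⊗[k] Z →ₗ[k] X ⊗[k] (Y ⊗[k] Z) := (TensorProduct.assoc k X Y Z).toLinearMap
abbrev ascs : X ⊗[k] (Y ⊗[k] Z) →ₗ[k] (X ⊗[k] Y) ⊗[k] Z := (TensorProduct.assoc k X Y Z).symm.toLinearMap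
abbrev mid4 : (X ⊗[k] Y) ⊗[k] (Z ⊗[k] W) →ₗ[k] (X ⊗[k] Z) ⊗[k] (Y ⊗[k] W) :=
  (TensorProduct.tensorTensorTensorComm k X Y Z W).toLinearMap
end Shortcuts

section Mul
variable (H : Type) [AddCommGroup H] [Module k H]
def opMul (μ : H ⊗[k] H →ₗ[k] H) : H ⊗[k] H →ₗ[k] H := μ ∘ₗ cmm k H H
def lmulBy (μ : H ⊗[k] H →ₗ[k] H) (h : H) : H →ₗ[k] H := μ ∘ₗ TensorProduct.mk k H H h
def rmulBy (μ : H ⊗[k] H →ₗ[k] H) (h : H) : H →ₗ[k] H := μ ∘ₗ (TensorProduct.mk k H H).flip h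
variable {H}
variable {V W : Type} [AddCommGroup V] [Module k V] [AddCommGroup W] [Module k W]
def diagL (μ : H ⊗[k] H →ₗ[k] H) (ρV : V →ₗ[k] H ⊗[k] V) (ρW : W →ₗ[k] H ⊗[k] W) :
    (V ⊗[k] W) →ₗ[k] H ⊗[k] (V ⊗[k] W) :=
  (μ.rTensor (V ⊗[k] W)) ∘ₗ mid4 k H V H W ∘ₗ (TensorProduct.map ρV ρW)
def diagR (μ : H ⊗[k] H →ₗ[k] H) (ρV : V →ₗ[k] V ⊗[k] H) (ρW : W →ₗ[k] W ⊗[k] H) :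
    (V ⊗[k] W) →ₗ[k] (V ⊗[k] W) ⊗[k] H :=
  (μ.lTensor (V ⊗[k] W)) ∘ₗ mid4 k V H W H ∘ₗ (TensorProduct.map ρV ρW)
end Mul

section TpowSec
variable (A : Type) [AddCommGroup A] [Module k A]
def Tpow : ℕ → ModuleCat k
  | 0 => ModuleCat.of k k
  | n+1 => ModuleCat.of k (A ⊗[k] (Tpow n : Type))

/-- the linear equivalence extracting the *last* tensor factor of `Tpow k A (n+1)`. -/
def epow : ∀ n : ℕ, (Tpow k A (n+1) : Type) ≃ₗ[k] (Tpow k A n : Type) ⊗[k] A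
  | 0 => TensorProduct.comm k A k
  | n+1 => (LinearEquiv.lTensor A (epow n)).trans
      (TensorProduct.assoc k A (Tpow k A n : Type) A).symm
end TpowSec

section TrivCoact
variable (H : Type) [Ring H] [Algebra k H]
variable (M : Type) [AddCommGroup M] [Module k M]
/-- the trivial left coaction `m ↦ 1 ⊗ m`. -/
def trivL : M →ₗ[k] H ⊗[k] M := TensorProduct.mk k H M 1
/-- the trivial right coaction `m ↦ m ⊗ 1`. -/
def trivR : M →ₗ[k] M ⊗[k] H := (TensorProduct.mk k M H).flip 1
/-- the trivial right action `m ⊗ h ↦ ε(h) m` associated to a counit map `ε`. -/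
def trivAct (ε : H →ₗ[k] k) : M ⊗[k] H →ₗ[k] M :=
  (TensorProduct.rid k M).toLinearMap ∘ₗ (ε.lTensor M)
end TrivCoact

section TpowCoact
variable {H : Type} [Ring H] [Algebra k H]
variable {A : Type} [AddCommGroup A] [Module k A]

/-- the diagonal left coaction on `Tpow k A n` induced by a left coaction on `A`
(with respect to a multiplication map `μ` on `H`). -/
def TpowρL (μ : H ⊗[k] H →ₗ[k] H) (ρA : A →ₗ[k] H ⊗[k] A) :
    ∀ n : ℕ, (Tpow k A n : Type) →ₗ[k] H ⊗[k] (Tpow k A n : Type)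
  | 0 => trivL k H k
  | n+1 => diagL k μ ρA (TpowρL μ ρA n)

/-- the diagonal right coaction on `Tpow k A n` induced by a right coaction on `A`. -/
def TpowρR (μ : H ⊗[k] H →ₗ[k] H) (ρA : A →ₗ[k] A ⊗[k] H) :
    ∀ n : ℕ, (Tpow k A n : Type) →ₗ[k] (Tpow k A n : Type) ⊗[k] H
  | 0 => trivR k H k
  | n+1 => diagR k μ ρA (TpowρR μ ρA n)

end TpowCoact

section TwistSec
variable {H M : Type} [AddCommGroup H] [Module k H] [AddCommGroup M] [Module k M]

/-- the anti-Yetter--Drinfeld twist map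
`h ⊗ (g ⊗ m) ↦ S(h⁽³⁾) g h⁽¹⁾ ⊗ m · h⁽²⁾`, expressed diagrammatically in terms of a
multiplication `μ`, a comultiplication `Δ` and an antipode `S` of `H` and a right action
`act` of `H` on `M`. -/
def Twist (μ : H ⊗[k] H →ₗ[k] H) (Δ : H →ₗ[k] H ⊗[k] H) (S : H →ₗ[k] H)
    (act : M ⊗[k] H →ₗ[k] M) : H ⊗[k] (H ⊗[k] M) →ₗ[k] H ⊗[k] M :=
  letI Δ₂ : H →ₗ[k] H ⊗[k] (H ⊗[k] H) := (Δ.lTensor H) ∘ₗ Δ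
  letI actc : H ⊗[k] M →ₗ[k] M := act ∘ₗ cmm k H M
  letI sm : H ⊗[k] H →ₗ[k] H := opMul k H μ
  letI u : (H ⊗[k] H) ⊗[k] M →ₗ[k] H ⊗[k] M :=
    (S.rTensor M) ∘ₗ (actc.lTensor H) ∘ₗ asc k H H M ∘ₗ ((cmm k H H).rTensor M)
  (sm.rTensor M) ∘ₗ ascs k H H M ∘ₗ (u.lTensor H) ∘ₗ
    (sm.rTensor ((H ⊗[k] H) ⊗[k] M)) ∘ₗ mid4 k H (H ⊗[k] H) H M ∘ₗ (Δ₂.rTensor (H ⊗[k] M))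

/-- the right-coaction version of the anti-Yetter--Drinfeld twist map:
`(m ⊗ g) ⊗ h ↦ m · h⁽²⁾ ⊗ S(h⁽³⁾) g h⁽¹⁾`. -/
def TwistR (μ : H ⊗[k] H →ₗ[k] H) (Δ : H →ₗ[k] H ⊗[k] H) (S : H →ₗ[k] H)
    (act : M ⊗[k] H →ₗ[k] M) : (M ⊗[k] H) ⊗[k] H →ₗ[k] M ⊗[k] H :=
  cmm k H M ∘ₗ Twist k μ Δ S act ∘ₗ ((cmm k M H).lTensor H) ∘ₗ cmm k (M ⊗[k] H) H

end TwistSec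

section ComodLaws
variable {H : Type} [Ring H] [Bialgebra k H]
variable {V : Type} [AddCommGroup V] [Module k V]

/-- coassociativity of a left `H`-coaction. -/
def IsCoassocL (ρ : V →ₗ[k] H ⊗[k] V) : Prop :=
  ρ.lTensor H ∘ₗ ρ = asc k H H V ∘ₗ ((Coalgebra.comul (R := k) (A := H)).rTensor V) ∘ₗ ρ

/-- counitality of a left `H`-coaction. -/
def IsCounitalL (ρ : V →ₗ[k] H ⊗[k] V) : Prop :=
  (TensorProduct.lid k V).toLinearMap ∘ₗ ((Coalgebra.counit (R := k) (A := H)).rTensor V) ∘ₗ ρ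
    = LinearMap.id

/-- coassociativity of a right `H`-coaction. -/
def IsCoassocR (ρ : V →ₗ[k] V ⊗[k] H) : Prop :=
  ρ.rTensor H ∘ₗ ρ = ascs k V H H ∘ₗ ((Coalgebra.comul (R := k) (A := H)).lTensor V) ∘ₗ ρ

/-- counitality of a right `H`-coaction. -/
def IsCounitalR (ρ : V →ₗ[k] V ⊗[k] H) : Prop :=
  (TensorProduct.rid k V).toLinearMap ∘ₗ ((Coalgebra.counit (R := k) (A := H)).lTensor V) ∘ₗ ρ
    = LinearMap.id

end ComodLaws

section ComodAlg
variable {H : Type} [Ring H] [Bialgebra k H]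

/-- `A` is a left `H`-comodule algebra via the coaction `ρ`:  `ρ` is a counital coassociative
coaction which is moreover a morphism of unital algebras. -/
def IsComodAlgL {A : Type} [Ring A] [Algebra k A] (ρ : A →ₗ[k] H ⊗[k] A) : Prop :=
  IsCoassocL k ρ ∧ IsCounitalL k ρ ∧ ρ 1 = 1 ∧ ∀ a b : A, ρ (a * b) = ρ a * ρ b

/-- `A` is a right `H`-comodule algebra via the coaction `ρ`. -/
def IsComodAlgR {A : Type} [Ring A] [Algebra k A] (ρ : A →ₗ[k] A ⊗[k] H) : Prop :=
  IsCoassocR k ρ ∧ IsCounitalR k ρ ∧ ρ 1 = 1 ∧ ∀ a b : A, ρ (a * b) = ρ a * ρ b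

/-- `C` is a right `H`-comodule coalgebra via the coaction `ρ`:  `ρ` is a counital
coassociative coaction which is moreover a morphism of coalgebras, i.e.
`c₍₀₎⁽¹⁾ ⊗ c₍₀₎⁽²⁾ ⊗ c₍₁₎ = c⁽¹⁾₍₀₎ ⊗ c⁽²⁾₍₀₎ ⊗ c⁽¹⁾₍₁₎c⁽²⁾₍₁₎` and `ε(c₍₀₎)c₍₁₎ = ε(c)1`. -/
def IsComodCoalgR {C : Type} [AddCommGroup C] [Module k C] [Coalgebra k C]
    (ρ : C →ₗ[k] C ⊗[k] H) : Prop :=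
  IsCoassocR k ρ ∧ IsCounitalR k ρ
  ∧ ((Coalgebra.comul (R := k) (A := C)).rTensor H) ∘ₗ ρ
      = ((LinearMap.mul' k H).lTensor (C ⊗[k] C)) ∘ₗ mid4 k C H C H
          ∘ₗ (TensorProduct.map ρ ρ) ∘ₗ (Coalgebra.comul (R := k) (A := C))
  ∧ (TensorProduct.lid k H).toLinearMap ∘ₗ ((Coalgebra.counit (R := k) (A := C)).rTensor H) ∘ₗ ρ
      = (Algebra.linearMap k H) ∘ₗ (Coalgebra.counit (R := k) (A := C))

end ComodAlg

section Actions
variable {H : Type} [Ring H] [Algebra k H]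
variable {M : Type} [AddCommGroup M] [Module k M]

/-- `act` is a unital associative right action of the algebra `H` on `M`. -/
def IsRAct (act : M ⊗[k] H →ₗ[k] M) : Prop :=
  (∀ m : M, act (m ⊗ₜ[k] 1) = m) ∧
    ∀ (m : M) (g h : H), act (act (m ⊗ₜ[k] g) ⊗ₜ[k] h) = act (m ⊗ₜ[k] (g * h))

/-- `act` is a unital associative right action of `(H, μ, e)` on `M` where the
multiplication `μ` and unit `e` are given explicitly. -/
def IsRActμ (μ : H ⊗[k] H →ₗ[k] H) (e : H) (act : M ⊗[k] H →ₗ[k] M) : Prop :=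
  (∀ m : M, act (m ⊗ₜ[k] e) = m) ∧
    ∀ (m : M) (g h : H), act (act (m ⊗ₜ[k] g) ⊗ₜ[k] h) = act (m ⊗ₜ[k] μ (g ⊗ₜ[k] h))

end Actions

section ModAlg
variable {H : Type} [Ring H] [Bialgebra k H]

/-- `β` is a left action of the bialgebra `H` on `A` making `A` a left `H`-module algebra. -/
def IsModuleAlgL {A : Type} [Ring A] [Algebra k A]
    (β : H ⊗[k] A →ₗ[k] A) : Prop :=
  (∀ a : A, β (1 ⊗ₜ[k] a) = a)
  ∧ (∀ (g h : H) (a : A), β (g ⊗ₜ[k] β (h ⊗ₜ[k] a)) = β ((g * h) ⊗ₜ[k] a))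
  ∧ (β ∘ₗ ((LinearMap.mul' k A).lTensor H)
      = (LinearMap.mul' k A) ∘ₗ (TensorProduct.map β β) ∘ₗ mid4 k H H A A
          ∘ₗ ((Coalgebra.comul (R := k) (A := H)).rTensor (A ⊗[k] A)))
  ∧ (∀ h : H, β (h ⊗ₜ[k] (1 : A)) = (Coalgebra.counit (R := k) (A := H) h) • (1 : A))

end ModAlg

section LeftSAYD
variable {H : Type} [Ring H] [HopfAlgebra k H]
variable {A M : Type} [AddCommGroup A] [Module k A] [AddCommGroup M] [Module k M]

/-- colinearity of `φ : V → M` with respect to left `H`-coactions. -/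
def IsColinL {V : Type} [AddCommGroup V] [Module k V]
    (ρV : V →ₗ[k] H ⊗[k] V) (ρM : M →ₗ[k] H ⊗[k] M) (φ : V →ₗ[k] M) : Prop :=
  ρM ∘ₗ φ = φ.lTensor H ∘ₗ ρV

/-- the `^A H`-anti-Yetter--Drinfeld condition for a colinear map `φ : A ⊗ W → M`:
`(φ(a₍₀₎ ⊗ w) · a₍₋₁₎)₍₋₁₎ ⊗ (φ(a₍₀₎ ⊗ w) · a₍₋₁₎)₍₀₎
  = S(a₍₋₁₎⁽³⁾) φ(a₍₀₎ ⊗ w)₍₋₁₎ a₍₋₁₎⁽¹⁾ ⊗ φ(a₍₀₎ ⊗ w)₍₀₎ · a₍₋₁₎⁽²⁾`. -/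
def AYDcondL {W : Type} [AddCommGroup W] [Module k W]
    (ρA : A →ₗ[k] H ⊗[k] A) (ρM : M →ₗ[k] H ⊗[k] M) (act : M ⊗[k] H →ₗ[k] M)
    (φ : (A ⊗[k] W) →ₗ[k] M) : Prop :=
  ρM ∘ₗ act ∘ₗ cmm k H M ∘ₗ (φ.lTensor H) ∘ₗ asc k H A W ∘ₗ (ρA.rTensor W)
  = Twist k (LinearMap.mul' k H) (Coalgebra.comul (R := k)) (HopfAlgebra.antipode (R := k)) act
      ∘ₗ ((ρM ∘ₗ φ).lTensor H) ∘ₗ asc k H A W ∘ₗ (ρA.rTensor W)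

/-- the stability condition for a map `φ : V → M`:  `φ(v₍₀₎) · v₍₋₁₎ = φ(v)`. -/
def StabCondL {V : Type} [AddCommGroup V] [Module k V]
    (ρV : V →ₗ[k] H ⊗[k] V) (act : M ⊗[k] H →ₗ[k] M) (φ : V →ₗ[k] M) : Prop :=
  act ∘ₗ cmm k H M ∘ₗ (φ.lTensor H) ∘ₗ ρV = φ

/-- `M` (a module and comodule over `H`) is an `^A H`-SAYD module for the left `H`-comodule
(algebra) `A`:  every `H`-colinear map `φ : A^{⊗(n+1)} → M` (with respect to the diagonal
coaction) satisfies the `^A H`-AYD and stability conditions. -/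
def IsAHSAYDL (ρA : A →ₗ[k] H ⊗[k] A) (ρM : M →ₗ[k] H ⊗[k] M)
    (act : M ⊗[k] H →ₗ[k] M) : Prop :=
  ∀ n : ℕ, ∀ φ : (A ⊗[k] (Tpow k A n : Type)) →ₗ[k] M,
    IsColinL k (TpowρL k (LinearMap.mul' k H) ρA (n + 1)) ρM φ →
      AYDcondL k ρA ρM act φ ∧ StabCondL k (TpowρL k (LinearMap.mul' k H) ρA (n + 1)) act φ

/-- the left-coaction rotation map on `Tpow k A (n+1)`:
`a₀ ⊗ ⋯ ⊗ aₙ ↦ aₙ₍₋₁₎ ⊗ (aₙ₍₀₎ ⊗ a₀ ⊗ ⋯ ⊗ aₙ₋₁)`. -/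
def rotρL (ρA : A →ₗ[k] H ⊗[k] A) (n : ℕ) :
    (Tpow k A (n+1) : Type) →ₗ[k] H ⊗[k] (Tpow k A (n+1) : Type) :=
  asc k H A (Tpow k A n : Type) ∘ₗ cmm k (Tpow k A n : Type) (H ⊗[k] A)
    ∘ₗ (ρA.lTensor (Tpow k A n : Type)) ∘ₗ (epow k A n).toLinearMap

/-- the cyclic operator `τₙ` on `Hom(A^{⊗(n+1)}, M)`:
`(τₙ f)(a₀ ⊗ ⋯ ⊗ aₙ) = f(aₙ₍₀₎ ⊗ a₀ ⊗ ⋯ ⊗ aₙ₋₁) · aₙ₍₋₁₎`. -/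
def tauL (ρA : A →ₗ[k] H ⊗[k] A) (act : M ⊗[k] H →ₗ[k] M) (n : ℕ)
    (φ : (Tpow k A (n+1) : Type) →ₗ[k] M) : (Tpow k A (n+1) : Type) →ₗ[k] M :=
  act ∘ₗ cmm k H M ∘ₗ (φ.lTensor H) ∘ₗ rotρL k ρA n

/-- `M` is an `^A H`-HCC (Hopf cyclic coefficients) for the left `H`-comodule algebra `A`:
the cyclic operator `τₙ` is well defined on the `H`-colinear maps `A^{⊗(n+1)} → M`
(so the whole cocyclic structure is well defined) and satisfies `τₙ^{n+1} = id`, making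
`Hom^H(A^{⊗(n+1)}, M)` a cocyclic module. -/
def IsAHHCCL (ρA : A →ₗ[k] H ⊗[k] A) (ρM : M →ₗ[k] H ⊗[k] M)
    (act : M ⊗[k] H →ₗ[k] M) : Prop :=
  ∀ n : ℕ, ∀ φ : (Tpow k A (n+1) : Type) →ₗ[k] M,
    IsColinL k (TpowρL k (LinearMap.mul' k H) ρA (n + 1)) ρM φ →
      IsColinL k (TpowρL k (LinearMap.mul' k H) ρA (n + 1)) ρM (tauL k ρA act n φ)
      ∧ (tauL k ρA act n)^[n+1] φ = φ

/-- `M` is a (right-left) stable anti-Yetter--Drinfeld module over `H`: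
`(m·h)₍₋₁₎ ⊗ (m·h)₍₀₎ = S(h⁽³⁾) m₍₋₁₎ h⁽¹⁾ ⊗ m₍₀₎ · h⁽²⁾` and `m₍₀₎ · m₍₋₁₎ = m`. -/
def IsSAYD (ρM : M →ₗ[k] H ⊗[k] M) (act : M ⊗[k] H →ₗ[k] M) : Prop :=
  (ρM ∘ₗ act
    = Twist k (LinearMap.mul' k H) (Coalgebra.comul (R := k)) (HopfAlgebra.antipode (R := k)) act
        ∘ₗ (ρM.lTensor H) ∘ₗ cmm k M H)
  ∧ act ∘ₗ cmm k H M ∘ₗ ρM = LinearMap.id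

end LeftSAYD
section Characters
variable {H : Type} [Ring H] [HopfAlgebra k H]

/-- `σ` is a group-like element of `H`. -/
def IsGrouplike (σ : H) : Prop :=
  Coalgebra.comul (R := k) σ = σ ⊗ₜ[k] σ ∧ Coalgebra.counit (R := k) σ = 1

/-- the `δ`-twisted antipode `S_δ(h) = δ(h⁽¹⁾) S(h⁽²⁾)` of a character `δ : H → k`. -/
def Sdelta (δ : H →ₐ[k] k) : H →ₗ[k] H :=
  (TensorProduct.lid k H).toLinearMap
    ∘ₗ (TensorProduct.map δ.toLinearMap (HopfAlgebra.antipode (R := k)))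
    ∘ₗ (Coalgebra.comul (R := k))

/-- the right action of `H` on `k` through a character `δ` : `x · h = δ(h) x`. -/
def actChar (δ : H →ₐ[k] k) : k ⊗[k] H →ₗ[k] k :=
  (TensorProduct.lid k k).toLinearMap ∘ₗ (δ.toLinearMap.lTensor k)

/-- the left coaction of `H` on `k` given by a (group-like) element `σ` : `x ↦ σ ⊗ x`. -/
def coactGrouplike (σ : H) : k →ₗ[k] H ⊗[k] k := TensorProduct.mk k H k σ

end Characters

section RightSAYD
/- The right-coaction versions, with the Hopf structure maps `μ`, `Δ`, `S` given explicitly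
(so that they can be applied to the bicrossed product Hopf algebra structure on `F ⊗ U`). -/
variable {H : Type} [Ring H] [Algebra k H]
variable {A M : Type} [AddCommGroup A] [Module k A] [AddCommGroup M] [Module k M]

/-- colinearity of `φ : V → M` with respect to right `H`-coactions. -/
def IsColinR {V : Type} [AddCommGroup V] [Module k V]
    (ρV : V →ₗ[k] V ⊗[k] H) (ρM : M →ₗ[k] M ⊗[k] H) (φ : V →ₗ[k] M) : Prop :=
  ρM ∘ₗ φ = φ.rTensor H ∘ₗ ρV

/-- the canonical map `A ⊗ W → (A ⊗ W) ⊗ H`, `a ⊗ w ↦ (a₍₀₎ ⊗ w) ⊗ a₍₁₎`,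
coacting on the first tensor factor only. -/
def coactFirstR {W : Type} [AddCommGroup W] [Module k W] (ρA : A →ₗ[k] A ⊗[k] H) :
    (A ⊗[k] W) →ₗ[k] (A ⊗[k] W) ⊗[k] H :=
  ascs k A W H ∘ₗ ((cmm k H W).lTensor A) ∘ₗ asc k A H W ∘ₗ (ρA.rTensor W)

/-- the right-coaction version of the `^A H`-anti-Yetter--Drinfeld condition for a
colinear map `φ : A ⊗ W → M`. -/
def AYDcondR {W : Type} [AddCommGroup W] [Module k W]
    (μ : H ⊗[k] H →ₗ[k] H) (Δ : H →ₗ[k] H ⊗[k] H) (S : H →ₗ[k] H)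
    (ρA : A →ₗ[k] A ⊗[k] H) (ρM : M →ₗ[k] M ⊗[k] H) (act : M ⊗[k] H →ₗ[k] M)
    (φ : (A ⊗[k] W) →ₗ[k] M) : Prop :=
  ρM ∘ₗ act ∘ₗ (φ.rTensor H) ∘ₗ coactFirstR k ρA
  = TwistR k μ Δ S act ∘ₗ ((ρM ∘ₗ φ).rTensor H) ∘ₗ coactFirstR k ρA

/-- the right-coaction stability condition : `φ(v₍₀₎) · v₍₁₎ = φ(v)`. -/
def StabCondR {V : Type} [AddCommGroup V] [Module k V]
    (ρV : V →ₗ[k] V ⊗[k] H) (act : M ⊗[k] H →ₗ[k] M) (φ : V →ₗ[k] M) : Prop :=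
  act ∘ₗ (φ.rTensor H) ∘ₗ ρV = φ

/-- `M` is an `^A H`-SAYD module for a *right* `H`-comodule (algebra) `A`, where the Hopf
structure maps `μ`, `Δ`, `S` of `H` are given explicitly. -/
def IsAHSAYDR (μ : H ⊗[k] H →ₗ[k] H) (Δ : H →ₗ[k] H ⊗[k] H) (S : H →ₗ[k] H)
    (ρA : A →ₗ[k] A ⊗[k] H) (ρM : M →ₗ[k] M ⊗[k] H) (act : M ⊗[k] H →ₗ[k] M) : Prop :=
  ∀ n : ℕ, ∀ φ : (A ⊗[k] (Tpow k A n : Type)) →ₗ[k] M,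
    IsColinR k (TpowρR k μ ρA (n + 1)) ρM φ →
      AYDcondR k μ Δ S ρA ρM act φ ∧ StabCondR k (TpowρR k μ ρA (n + 1)) act φ

end RightSAYD
section CotensorSide
variable {H : Type} [Ring H] [HopfAlgebra k H]
variable {C M : Type} [AddCommGroup C] [Module k C] [AddCommGroup M] [Module k M]

/-- the cotensor defect map `V ⊗ M → V ⊗ (H ⊗ M)`, whose kernel is the cotensor product
`V □_H M` of a right `H`-comodule `V` and a left `H`-comodule `M`. -/
def cotensorDefect {V : Type} [AddCommGroup V] [Module k V]
    (ρV : V →ₗ[k] V ⊗[k] H) (ρM : M →ₗ[k] H ⊗[k] M) :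
    V ⊗[k] M →ₗ[k] V ⊗[k] (H ⊗[k] M) :=
  asc k V H M ∘ₗ (ρV.rTensor M) - (ρM.lTensor V)

/-- the map `v ⊗ m ↦ v₍₀₎ ⊗ m · v₍₁₎`. -/
def stabMapC {V : Type} [AddCommGroup V] [Module k V]
    (ρV : V →ₗ[k] V ⊗[k] H) (act : M ⊗[k] H →ₗ[k] M) : V ⊗[k] M →ₗ[k] V ⊗[k] M :=
  ((act ∘ₗ cmm k H M).lTensor V) ∘ₗ asc k V H M ∘ₗ (ρV.rTensor M)

/-- the `H^C`-anti-Yetter--Drinfeld condition: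
`c₍₀₎ ⊗ (m·c₍₁₎)₍₋₁₎ ⊗ (m·c₍₁₎)₍₀₎ = c₍₀₎ ⊗ S(c₍₁₎⁽³⁾) m₍₋₁₎ c₍₁₎⁽¹⁾ ⊗ m₍₀₎ · c₍₁₎⁽²⁾`. -/
def AYDcondC (ρC : C →ₗ[k] C ⊗[k] H) (ρM : M →ₗ[k] H ⊗[k] M)
    (act : M ⊗[k] H →ₗ[k] M) : Prop :=
  ((ρM ∘ₗ act ∘ₗ cmm k H M).lTensor C) ∘ₗ asc k C H M ∘ₗ (ρC.rTensor M)
  = ((Twist k (LinearMap.mul' k H) (Coalgebra.comul (R := k))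
        (HopfAlgebra.antipode (R := k)) act ∘ₗ (ρM.lTensor H)).lTensor C)
      ∘ₗ asc k C H M ∘ₗ (ρC.rTensor M)

/-- `M` is an `H^C`-SAYD module for the right `H`-comodule (coalgebra) `C` :
the `H^C`-AYD condition holds, and the stability condition
`d̃₍₀₎ ⊗ m · d̃₍₁₎ = d̃ ⊗ m` holds on the cotensor product `C^{⊗(n+1)} □_H M`. -/
def IsHCSAYD (ρC : C →ₗ[k] C ⊗[k] H) (ρM : M →ₗ[k] H ⊗[k] M)
    (act : M ⊗[k] H →ₗ[k] M) : Prop :=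
  AYDcondC k ρC ρM act
  ∧ ∀ n : ℕ, ∀ x ∈ LinearMap.ker
      (cotensorDefect k (TpowρR k (LinearMap.mul' k H) ρC (n + 1)) ρM),
      stabMapC k (TpowρR k (LinearMap.mul' k H) ρC (n + 1)) act x = x

/-- the cyclic operator `τₙ` on `C^{⊗(n+1)} ⊗ M`:
`c₀ ⊗ ⋯ ⊗ cₙ ⊗ m ↦ c₁ ⊗ ⋯ ⊗ cₙ ⊗ c₀₍₀₎ ⊗ m · c₀₍₁₎`. -/
def tauC (ρC : C →ₗ[k] C ⊗[k] H) (act : M ⊗[k] H →ₗ[k] M) (n : ℕ) :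
    ((Tpow k C (n+1) : Type) ⊗[k] M) →ₗ[k] ((Tpow k C (n+1) : Type) ⊗[k] M) :=
  letI W : Type := (Tpow k C n : Type)
  (((epow k C n).symm.toLinearMap).rTensor M)
    ∘ₗ ((act ∘ₗ cmm k H M).lTensor (W ⊗[k] C))
    ∘ₗ asc k (W ⊗[k] C) H M
    ∘ₗ ((ascs k W C H).rTensor M)
    ∘ₗ ((cmm k (C ⊗[k] H) W).rTensor M)
    ∘ₗ ((ρC.rTensor W).rTensor M)

/-- `M` is an `H^C`-HCC (Hopf cyclic coefficients) for the right `H`-comodule coalgebra `C` :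
the cyclic operator `τₙ` is well defined on the cotensor product `C^{⊗(n+1)} □_H M`
(so the whole cocyclic structure is well defined) and satisfies `τₙ^{n+1} = id` on it,
making `C^{⊗(n+1)} □_H M` a cocyclic module. -/
def IsHCHCC (ρC : C →ₗ[k] C ⊗[k] H) (ρM : M →ₗ[k] H ⊗[k] M)
    (act : M ⊗[k] H →ₗ[k] M) : Prop :=
  ∀ n : ℕ, ∀ x ∈ LinearMap.ker
      (cotensorDefect k (TpowρR k (LinearMap.mul' k H) ρC (n + 1)) ρM),
    tauC k ρC act n x ∈ LinearMap.ker
      (cotensorDefect k (TpowρR k (LinearMap.mul' k H) ρC (n + 1)) ρM)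
    ∧ (tauC k ρC act n)^[n+1] x = x

end CotensorSide

section CommCocommCond
variable {H : Type} [AddCommGroup H] [Module k H]
variable {A C W : Type} [AddCommGroup A] [Module k A] [AddCommGroup C] [Module k C]
  [AddCommGroup W] [Module k W]

/-- auxiliary map `(x ⊗ y) ⊗ z ↦ (z * x) ⊗ y`. -/
def muL (μ : H ⊗[k] H →ₗ[k] H) : (H ⊗[k] H) ⊗[k] H →ₗ[k] H ⊗[k] H :=
  (μ.rTensor H) ∘ₗ ascs k H H H ∘ₗ cmm k (H ⊗[k] H) H

/-- auxiliary map `(x ⊗ y) ⊗ z ↦ (y * z) ⊗ x`. -/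
def muR (μ : H ⊗[k] H →ₗ[k] H) : (H ⊗[k] H) ⊗[k] H →ₗ[k] H ⊗[k] H :=
  cmm k H H ∘ₗ (μ.lTensor H) ∘ₗ asc k H H H

/-- auxiliary map `z ⊗ (x ⊗ y) ↦ (z * x) ⊗ y`. -/
def nuL (μ : H ⊗[k] H →ₗ[k] H) : H ⊗[k] (H ⊗[k] H) →ₗ[k] H ⊗[k] H :=
  (μ.rTensor H) ∘ₗ ascs k H H H

/-- auxiliary map `z ⊗ (x ⊗ y) ↦ (y * z) ⊗ x`. -/
def nuR (μ : H ⊗[k] H →ₗ[k] H) : H ⊗[k] (H ⊗[k] H) →ₗ[k] H ⊗[k] H :=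
  cmm k H H ∘ₗ (μ.lTensor H) ∘ₗ asc k H H H ∘ₗ cmm k H (H ⊗[k] H)

/-- `H` coacts *cocommutatively* on the pair `(A, W)` (`A` and `W` left `H`-comodules):
`w₍₋₁₎ a₍₋₁₎⁽¹⁾ ⊗ a₍₋₁₎⁽²⁾ ⊗ a₍₀₎ ⊗ w₍₀₎ = a₍₋₁₎⁽²⁾ w₍₋₁₎ ⊗ a₍₋₁₎⁽¹⁾ ⊗ a₍₀₎ ⊗ w₍₀₎`. -/
def CocommCondL (μ : H ⊗[k] H →ₗ[k] H) (Δ : H →ₗ[k] H ⊗[k] H)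
    (ρA : A →ₗ[k] H ⊗[k] A) (ρW : W →ₗ[k] H ⊗[k] W) : Prop :=
  letI base : A ⊗[k] W →ₗ[k] ((H ⊗[k] H) ⊗[k] H) ⊗[k] (A ⊗[k] W) :=
    mid4 k (H ⊗[k] H) A H W ∘ₗ (TensorProduct.map ((Δ.rTensor A) ∘ₗ ρA) ρW)
  ((muL k μ).rTensor (A ⊗[k] W)) ∘ₗ base = ((muR k μ).rTensor (A ⊗[k] W)) ∘ₗ base

/-- `H` coacts *cocommutatively* on the pair `(W, C)` (`W` and `C` right `H`-comodules):
`w₍₀₎ ⊗ c₍₀₎ ⊗ w₍₁₎ c₍₁₎⁽¹⁾ ⊗ c₍₁₎⁽²⁾ = w₍₀₎ ⊗ c₍₀₎ ⊗ c₍₁₎⁽²⁾ w₍₁₎ ⊗ c₍₁₎⁽¹⁾`. -/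
def CocommCondR (μ : H ⊗[k] H →ₗ[k] H) (Δ : H →ₗ[k] H ⊗[k] H)
    (ρW : W →ₗ[k] W ⊗[k] H) (ρC : C →ₗ[k] C ⊗[k] H) : Prop :=
  letI base : W ⊗[k] C →ₗ[k] (W ⊗[k] C) ⊗[k] (H ⊗[k] (H ⊗[k] H)) :=
    mid4 k W H C (H ⊗[k] H) ∘ₗ (TensorProduct.map ρW ((Δ.lTensor C) ∘ₗ ρC))
  ((nuL k μ).lTensor (W ⊗[k] C)) ∘ₗ base = ((nuR k μ).lTensor (W ⊗[k] C)) ∘ₗ base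

end CommCocommCond
section Bicross
variable (F U : Type) [Ring F] [HopfAlgebra k F] [Ring U] [HopfAlgebra k U]

/-- inclusion `F → F ⊗ U`, `f ↦ f ⊗ 1`. -/
def jF : F →ₗ[k] F ⊗[k] U := (TensorProduct.mk k F U).flip 1
/-- inclusion `U → F ⊗ U`, `u ↦ 1 ⊗ u`. -/
def jU : U →ₗ[k] F ⊗[k] U := TensorProduct.mk k F U 1

/-- the right coaction of `H = F ⋈ U` on `F`: `f ↦ f⁽¹⁾ ⊗ (f⁽²⁾ ⋈ 1)`. -/
def bcoactF : F →ₗ[k] F ⊗[k] (F ⊗[k] U) :=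
  ((jF k F U).lTensor F) ∘ₗ (Coalgebra.comul (R := k) (A := F))

variable {F U}
variable (α : U ⊗[k] F →ₗ[k] F) (ρU : U →ₗ[k] U ⊗[k] F)

/-- the multiplication of the bicrossed product `F ⋈ U`:
`(f ⋈ u)(g ⋈ v) = f (u⁽¹⁾ ▷ g) ⋈ u⁽²⁾ v`, where `▷` is the action `α`. -/
def bmul : (F ⊗[k] U) ⊗[k] (F ⊗[k] U) →ₗ[k] F ⊗[k] U :=
  letI lam : (F ⊗[k] U) ⊗[k] F →ₗ[k] F :=
    (LinearMap.mul' k F) ∘ₗ (α.lTensor F) ∘ₗ asc k F U F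
  (TensorProduct.map lam (LinearMap.mul' k U))
    ∘ₗ mid4 k (F ⊗[k] U) U F U
    ∘ₗ ((ascs k F U U).rTensor (F ⊗[k] U))
    ∘ₗ (((Coalgebra.comul (R := k) (A := U)).lTensor F).rTensor (F ⊗[k] U))

/-- the comultiplication of the bicrossed product `F ⋈ U`:
`Δ(f ⋈ u) = (f⁽¹⁾ ⋈ u⁽¹⁾₍₀₎) ⊗ (f⁽²⁾ u⁽¹⁾₍₁₎ ⋈ u⁽²⁾)`, where `u ↦ u₍₀₎ ⊗ u₍₁₎` is the
coaction `ρU` of `F` on `U`. -/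
def bcomul : (F ⊗[k] U) →ₗ[k] (F ⊗[k] U) ⊗[k] (F ⊗[k] U) :=
  letI w : F ⊗[k] (F ⊗[k] U) →ₗ[k] F ⊗[k] U :=
    ((opMul k F (LinearMap.mul' k F)).rTensor U) ∘ₗ ascs k F F U
  (w.lTensor (F ⊗[k] U))
    ∘ₗ asc k (F ⊗[k] U) F (F ⊗[k] U)
    ∘ₗ ((ascs k F U F).rTensor (F ⊗[k] U))
    ∘ₗ ((ρU.lTensor F).rTensor (F ⊗[k] U))
    ∘ₗ mid4 k F F U U
    ∘ₗ (TensorProduct.map (Coalgebra.comul (R := k) (A := F))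
          (Coalgebra.comul (R := k) (A := U)))

/-- the antipode of the bicrossed product `F ⋈ U`:
`S(f ⋈ u) = (1 ⋈ S_U(u₍₀₎)) · (S_F(f u₍₁₎) ⋈ 1)`. -/
def bS : (F ⊗[k] U) →ₗ[k] F ⊗[k] U :=
  bmul k α ∘ₗ (TensorProduct.map (jU k F U ∘ₗ (HopfAlgebra.antipode (R := k) (A := U)))
      (jF k F U ∘ₗ (HopfAlgebra.antipode (R := k) (A := F))
        ∘ₗ (opMul k F (LinearMap.mul' k F))))
    ∘ₗ asc k U F F
    ∘ₗ cmm k F (U ⊗[k] F)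
    ∘ₗ (ρU.lTensor F)

/-- the right coaction of `H = F ⋈ U` on `U`: `u ↦ u₍₀₎ ⊗ (u₍₁₎ ⋈ 1)`. -/
def bcoactU : U →ₗ[k] U ⊗[k] (F ⊗[k] U) :=
  ((jF k F U).lTensor U) ∘ₗ ρU

/-- `(F, U)` together with the action `α : U ⊗ F → F` and the coaction `ρU : U → U ⊗ F`
is a matched pair of Hopf algebras, so that the bicrossed product `F ⋈ U` (with
multiplication `bmul` and comultiplication `bcomul`) is a Hopf algebra:
`F` is a left `U`-module algebra, `U` is a right `F`-comodule coalgebra, and the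
Majid compatibility conditions hold. -/
def IsMatchedPair : Prop :=
  -- `α` is a left `U`-module structure on `F`
  (∀ f : F, α ((1 : U) ⊗ₜ[k] f) = f)
  ∧ (α ∘ₗ ((LinearMap.mul' k U).rTensor F) = α ∘ₗ (α.lTensor U) ∘ₗ asc k U U F)
  -- making `F` a `U`-module algebra
  ∧ (α ∘ₗ ((LinearMap.mul' k F).lTensor U)
      = (LinearMap.mul' k F) ∘ₗ (TensorProduct.map α α) ∘ₗ mid4 k U U F F
          ∘ₗ ((Coalgebra.comul (R := k) (A := U)).rTensor (F ⊗[k] F)))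
  ∧ (∀ u : U, α (u ⊗ₜ[k] (1 : F)) = (Coalgebra.counit (R := k) (A := U) u) • (1 : F))
  -- `ρU` is a right `F`-comodule structure on `U`
  ∧ IsCoassocR k ρU ∧ IsCounitalR k ρU
  -- making `U` an `F`-comodule coalgebra
  ∧ (((Coalgebra.comul (R := k) (A := U)).rTensor F) ∘ₗ ρU
      = ((LinearMap.mul' k F).lTensor (U ⊗[k] U)) ∘ₗ mid4 k U F U F
          ∘ₗ (TensorProduct.map ρU ρU) ∘ₗ (Coalgebra.comul (R := k) (A := U)))
  ∧ ((TensorProduct.lid k F).toLinearMap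
        ∘ₗ ((Coalgebra.counit (R := k) (A := U)).rTensor F) ∘ₗ ρU
      = (Algebra.linearMap k F) ∘ₗ (Coalgebra.counit (R := k) (A := U)))
  -- `ρU(1) = 1 ⊗ 1`
  ∧ (ρU 1 = (1 : U) ⊗ₜ[k] (1 : F))
  -- multiplicativity: `ρ(uv) = u⁽¹⁾₍₀₎ v₍₀₎ ⊗ u⁽¹⁾₍₁₎ (u⁽²⁾ ▷ v₍₁₎)`
  ∧ (ρU ∘ₗ (LinearMap.mul' k U)
      = letI ζ : (((U ⊗[k] F) ⊗[k] U) ⊗[k] F) →ₗ[k] U ⊗[k] F :=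
          (TensorProduct.map (LinearMap.mul' k U) (LinearMap.mul' k F))
            ∘ₗ asc k (U ⊗[k] U) F F
            ∘ₗ ((ascs k U U F ∘ₗ ((cmm k F U).lTensor U) ∘ₗ asc k U F U).rTensor F)
        ζ ∘ₗ (α.lTensor ((U ⊗[k] F) ⊗[k] U))
          ∘ₗ mid4 k (U ⊗[k] F) U U F
          ∘ₗ ((ρU.rTensor U).rTensor (U ⊗[k] F))
          ∘ₗ (TensorProduct.map (Coalgebra.comul (R := k) (A := U)) ρU))
  -- compatibility: `u⁽²⁾₍₀₎ ⊗ (u⁽¹⁾ ▷ f) u⁽²⁾₍₁₎ = u⁽¹⁾₍₀₎ ⊗ u⁽¹⁾₍₁₎ (u⁽²⁾ ▷ f)`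
  ∧ (((opMul k F (LinearMap.mul' k F)).lTensor U) ∘ₗ asc k U F F
        ∘ₗ (α.lTensor (U ⊗[k] F)) ∘ₗ asc k (U ⊗[k] F) U F
        ∘ₗ ((cmm k U (U ⊗[k] F)).rTensor F) ∘ₗ ((ρU.lTensor U).rTensor F)
        ∘ₗ ((Coalgebra.comul (R := k) (A := U)).rTensor F)
      = ((LinearMap.mul' k F).lTensor U) ∘ₗ asc k U F F
          ∘ₗ (α.lTensor (U ⊗[k] F)) ∘ₗ asc k (U ⊗[k] F) U F
          ∘ₗ ((ρU.rTensor U).rTensor F)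
          ∘ₗ ((Coalgebra.comul (R := k) (A := U)).rTensor F))
  -- compatibility: `Δ_F(u ▷ f) = (u⁽¹⁾₍₀₎ ▷ f⁽¹⁾) ⊗ u⁽¹⁾₍₁₎ (u⁽²⁾ ▷ f⁽²⁾)`
  ∧ ((Coalgebra.comul (R := k) (A := F)) ∘ₗ α
      = letI ξ : (U ⊗[k] F) ⊗[k] F →ₗ[k] F ⊗[k] F :=
          (α.rTensor F) ∘ₗ ascs k U F F ∘ₗ ((cmm k F F).lTensor U) ∘ₗ asc k U F F
        ((LinearMap.mul' k F).lTensor F) ∘ₗ asc k F F F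
          ∘ₗ (TensorProduct.map ξ α)
          ∘ₗ mid4 k (U ⊗[k] F) U F F
          ∘ₗ ((ρU.rTensor U).rTensor (F ⊗[k] F))
          ∘ₗ (TensorProduct.map (Coalgebra.comul (R := k) (A := U))
                (Coalgebra.comul (R := k) (A := F))))
  -- compatibility: `ε(u ▷ f) = ε(u) ε(f)`
  ∧ (∀ (u : U) (f : F),
      Coalgebra.counit (R := k) (α (u ⊗ₜ[k] f))
        = Coalgebra.counit (R := k) u * Coalgebra.counit (R := k) f)

end Bicross
section CrossedProduct
variable {H : Type} [Ring H] [Algebra k H]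
variable {A B : Type} [Ring A] [Algebra k A] [Ring B] [Algebra k B]

/-- the multiplication of the crossed product algebra `A ⋊ B` for a left `H`-module
algebra `A` (action `β`) and a left `H`-comodule algebra `B` (coaction `ρB`):
`(a ⋊ b)(a' ⋊ b') = a (b₍₋₁₎ · a') ⋊ b₍₀₎ b'`. -/
def crossMul (β : H ⊗[k] A →ₗ[k] A) (ρB : B →ₗ[k] H ⊗[k] B) :
    (A ⊗[k] B) ⊗[k] (A ⊗[k] B) →ₗ[k] A ⊗[k] B :=
  letI lam : (A ⊗[k] H) ⊗[k] A →ₗ[k] A :=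
    (LinearMap.mul' k A) ∘ₗ (β.lTensor A) ∘ₗ asc k A H A
  (TensorProduct.map lam (LinearMap.mul' k B))
    ∘ₗ mid4 k (A ⊗[k] H) B A B
    ∘ₗ ((ascs k A H B).rTensor (A ⊗[k] B))
    ∘ₗ ((ρB.lTensor A).rTensor (A ⊗[k] B))

end CrossedProduct

section SimplicialOps
variable {R : Type} [AddCommGroup R] [Module k R]

/-- the rotation `a₀ ⊗ ⋯ ⊗ aₙ ↦ aₙ ⊗ a₀ ⊗ ⋯ ⊗ aₙ₋₁` on `Tpow k R (n+1)`. -/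
def rot (n : ℕ) : (Tpow k R (n+1) : Type) →ₗ[k] (Tpow k R (n+1) : Type) :=
  cmm k (Tpow k R n : Type) R ∘ₗ (epow k R n).toLinearMap

/-- `merge μ n i` multiplies the `i`-th and `(i+1)`-st tensor factors of `Tpow k R (n+2)`
(for `0 ≤ i ≤ n`; values at out-of-range indices are junk). -/
def merge (μ : R ⊗[k] R →ₗ[k] R) :
    ∀ (n i : ℕ), (Tpow k R (n+2) : Type) →ₗ[k] (Tpow k R (n+1) : Type)
  | n, 0 => (μ.rTensor (Tpow k R n : Type)) ∘ₗ ascs k R R (Tpow k R n : Type)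
  | 0, _+1 => (μ.rTensor (Tpow k R 0 : Type)) ∘ₗ ascs k R R (Tpow k R 0 : Type)
  | n+1, i+1 => (merge μ n i).lTensor R

/-- `ins e n i` inserts the element `e` in position `i+1` of `Tpow k R (n+1)`
(for `0 ≤ i ≤ n`; values at out-of-range indices are junk). -/
def ins (e : R) : ∀ (n i : ℕ), (Tpow k R (n+1) : Type) →ₗ[k] (Tpow k R (n+2) : Type)
  | n, 0 => (TensorProduct.mk k R (Tpow k R n : Type) e).lTensor R
  | 0, _+1 => (TensorProduct.mk k R (Tpow k R 0 : Type) e).lTensor R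
  | n+1, i+1 => (ins e n i).lTensor R

/-- the `i`-th coface operator of the standard cocyclic module of an algebra `(R, μ)`
(on cochains `Hom(R^{⊗(n+1)}, V)`); `i = n+1` is the twisted last coface
`(δ_{n+1} f)(r₀ ⊗ ⋯ ⊗ r_{n+1}) = f(r_{n+1} r₀ ⊗ r₁ ⊗ ⋯ ⊗ rₙ)`. -/
def faceAlg {V : Type} [AddCommGroup V] [Module k V] (μ : R ⊗[k] R →ₗ[k] R) (n i : ℕ)
    (f : (Tpow k R (n+1) : Type) →ₗ[k] V) : (Tpow k R (n+2) : Type) →ₗ[k] V :=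
  if i = n+1 then f ∘ₗ merge k μ n 0 ∘ₗ rot k (n+1) else f ∘ₗ merge k μ n i

/-- the `i`-th codegeneracy operator of the standard cocyclic module of an algebra. -/
def degAlg {V : Type} [AddCommGroup V] [Module k V] (e : R) (n i : ℕ)
    (f : (Tpow k R (n+2) : Type) →ₗ[k] V) : (Tpow k R (n+1) : Type) →ₗ[k] V :=
  f ∘ₗ ins k e n i

/-- the cyclic operator of the standard cocyclic module of an algebra:
`(τₙ f)(r₀ ⊗ ⋯ ⊗ rₙ) = f(rₙ ⊗ r₀ ⊗ ⋯ ⊗ rₙ₋₁)`. -/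
def cycAlg {V : Type} [AddCommGroup V] [Module k V] (n : ℕ)
    (f : (Tpow k R (n+1) : Type) →ₗ[k] V) : (Tpow k R (n+1) : Type) →ₗ[k] V :=
  f ∘ₗ rot k n

/-- the Hochschild coboundary `b = Σ_{i=0}^{n+1} (-1)^i δᵢ` of the standard (twisted)
cocyclic module of an algebra `(R, μ)`. -/
def bAlg {V : Type} [AddCommGroup V] [Module k V] (μ : R ⊗[k] R →ₗ[k] R) (n : ℕ)
    (f : (Tpow k R (n+1) : Type) →ₗ[k] V) : (Tpow k R (n+2) : Type) →ₗ[k] V :=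
  ∑ i ∈ Finset.range (n+2), ((-1 : ℤ)^i) • faceAlg k μ n i f

end SimplicialOps
section ModAlgSide
variable {H : Type} [Ring H] [HopfAlgebra k H]
variable {A M : Type} [AddCommGroup A] [Module k A] [AddCommGroup M] [Module k M]

/-- the diagonal left action of `H` on `Tpow k A n` induced by a left action `β` on `A`:
`h · (a₁ ⊗ ⋯ ⊗ aₙ) = h⁽¹⁾·a₁ ⊗ ⋯ ⊗ h⁽ⁿ⁾·aₙ`. -/
def actTpow (β : H ⊗[k] A →ₗ[k] A) :
    ∀ n : ℕ, H ⊗[k] (Tpow k A n : Type) →ₗ[k] (Tpow k A n : Type)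
  | 0 => (TensorProduct.lid k k).toLinearMap
      ∘ₗ ((Coalgebra.counit (R := k) (A := H)).rTensor k)
  | n+1 => (TensorProduct.map β (actTpow β n)) ∘ₗ mid4 k H H A (Tpow k A n : Type)
      ∘ₗ ((Coalgebra.comul (R := k) (A := H)).rTensor (A ⊗[k] (Tpow k A n : Type)))

/-- the left action of `H` on `M ⊗ A^{⊗(n+1)}` used to define the HKRS cocyclic module
of a module algebra: `h · (m ⊗ ã) = m · S(h⁽¹⁾) ⊗ h⁽²⁾ · ã`. -/
def actMA (β : H ⊗[k] A →ₗ[k] A) (act : M ⊗[k] H →ₗ[k] M) (n : ℕ) :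
    H ⊗[k] (M ⊗[k] (Tpow k A (n+1) : Type)) →ₗ[k] M ⊗[k] (Tpow k A (n+1) : Type) :=
  letI w : H ⊗[k] M →ₗ[k] M :=
    act ∘ₗ cmm k H M ∘ₗ ((HopfAlgebra.antipode (R := k)).rTensor M)
  (TensorProduct.map w (actTpow k β (n+1)))
    ∘ₗ mid4 k H H M (Tpow k A (n+1) : Type)
    ∘ₗ ((Coalgebra.comul (R := k) (A := H)).rTensor (M ⊗[k] (Tpow k A (n+1) : Type)))

/-- `φ : M ⊗ A^{⊗(n+1)} → k` is `H`-equivariant (i.e. `φ ∈ Hom_H(M ⊗ A^{⊗(n+1)}, k)`),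
with `k` the trivial `H`-module. -/
def IsInvariantMA (β : H ⊗[k] A →ₗ[k] A) (act : M ⊗[k] H →ₗ[k] M) (n : ℕ)
    (φ : (M ⊗[k] (Tpow k A (n+1) : Type)) →ₗ[k] k) : Prop :=
  φ ∘ₗ actMA k β act n
    = φ ∘ₗ (TensorProduct.lid k (M ⊗[k] (Tpow k A (n+1) : Type))).toLinearMap
        ∘ₗ ((Coalgebra.counit (R := k) (A := H)).rTensor
              (M ⊗[k] (Tpow k A (n+1) : Type)))

/-- the twisted rotation on `M ⊗ A^{⊗(n+1)}`:
`m ⊗ a₀ ⊗ ⋯ ⊗ aₙ ↦ m₍₀₎ ⊗ S⁻¹(m₍₋₁₎)·aₙ ⊗ a₀ ⊗ ⋯ ⊗ aₙ₋₁`. -/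
def rotMA (β : H ⊗[k] A →ₗ[k] A) (Sinv : H →ₗ[k] H) (ρM : M →ₗ[k] H ⊗[k] M) (n : ℕ) :
    M ⊗[k] (Tpow k A (n+1) : Type) →ₗ[k] M ⊗[k] (Tpow k A (n+1) : Type) :=
  (TensorProduct.leftComm k A M (Tpow k A n : Type)).toLinearMap
    ∘ₗ ((β ∘ₗ (Sinv.rTensor A)).rTensor (M ⊗[k] (Tpow k A n : Type)))
    ∘ₗ mid4 k H M A (Tpow k A n : Type)
    ∘ₗ ((rot k n).lTensor (H ⊗[k] M))
    ∘ₗ (ρM.rTensor (Tpow k A (n+1) : Type))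

/-- the cyclic operator of the HKRS cocyclic module `C^n_H(A, M) = Hom_H(M ⊗ A^{⊗(n+1)}, k)`:
`(τₙ φ)(m ⊗ a₀ ⊗ ⋯ ⊗ aₙ) = φ(m₍₀₎ ⊗ S⁻¹(m₍₋₁₎)·aₙ ⊗ a₀ ⊗ ⋯ ⊗ aₙ₋₁)`. -/
def cycMA (β : H ⊗[k] A →ₗ[k] A) (Sinv : H →ₗ[k] H) (ρM : M →ₗ[k] H ⊗[k] M) (n : ℕ)
    (φ : (M ⊗[k] (Tpow k A (n+1) : Type)) →ₗ[k] k) :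
    (M ⊗[k] (Tpow k A (n+1) : Type)) →ₗ[k] k :=
  φ ∘ₗ rotMA k β Sinv ρM n


/-- `M` is an `_A H`-SAYD coefficient module for the left `H`-module algebra `A` (in the
generalized sense): the cyclic operator of the HKRS cocyclic module
`C^n_H(A,M) = Hom_H(M ⊗ A^{⊗(n+1)}, k)` is well defined on equivariant cochains and
satisfies `τₙ^{n+1} = id`. -/
def IsMASAYD (β : H ⊗[k] A →ₗ[k] A) (Sinv : H →ₗ[k] H) (ρM : M →ₗ[k] H ⊗[k] M)
    (act : M ⊗[k] H →ₗ[k] M) : Prop :=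
  ∀ n : ℕ, ∀ φ : (M ⊗[k] (Tpow k A (n+1) : Type)) →ₗ[k] k,
    IsInvariantMA k β act n φ →
      IsInvariantMA k β act n (cycMA k β Sinv ρM n φ)
      ∧ (cycMA k β Sinv ρM n)^[n+1] φ = φ

end ModAlgSide

section ModAlgSideRing
variable {H : Type} [Ring H] [HopfAlgebra k H]
variable {A M : Type} [Ring A] [Algebra k A] [AddCommGroup M] [Module k M]

/-- the `i`-th coface of the HKRS cocyclic module `C^n_H(A, M)`; `i = n+1` is the twisted
last coface `(δ_{n+1} φ)(m ⊗ a₀ ⊗ ⋯ ⊗ a_{n+1}) = φ(m₍₀₎ ⊗ (S⁻¹(m₍₋₁₎)·a_{n+1}) a₀ ⊗ ⋯ ⊗ aₙ)`. -/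
def faceMA (β : H ⊗[k] A →ₗ[k] A) (Sinv : H →ₗ[k] H) (ρM : M →ₗ[k] H ⊗[k] M)
    (n i : ℕ) (φ : (M ⊗[k] (Tpow k A (n+1) : Type)) →ₗ[k] k) :
    (M ⊗[k] (Tpow k A (n+2) : Type)) →ₗ[k] k :=
  if i = n+1 then
    φ ∘ₗ ((merge k (LinearMap.mul' k A) n 0).lTensor M) ∘ₗ rotMA k β Sinv ρM (n+1)
  else φ ∘ₗ ((merge k (LinearMap.mul' k A) n i).lTensor M)

/-- the `i`-th codegeneracy of the HKRS cocyclic module `C^n_H(A, M)`. -/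
def degMA (n i : ℕ) (φ : (M ⊗[k] (Tpow k A (n+2) : Type)) →ₗ[k] k) :
    (M ⊗[k] (Tpow k A (n+1) : Type)) →ₗ[k] k :=
  φ ∘ₗ ((ins k (1 : A) n i).lTensor M)

/-- the Hochschild coboundary of the HKRS cocyclic module `C^n_H(A, M)`. -/
def bMA (β : H ⊗[k] A →ₗ[k] A) (Sinv : H →ₗ[k] H) (ρM : M →ₗ[k] H ⊗[k] M)
    (n : ℕ) (φ : (M ⊗[k] (Tpow k A (n+1) : Type)) →ₗ[k] k) :
    (M ⊗[k] (Tpow k A (n+2) : Type)) →ₗ[k] k :=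
  ∑ i ∈ Finset.range (n+2), ((-1 : ℤ)^i) • faceMA k β Sinv ρM n i φ

end ModAlgSideRing

section ComodAlgSide
variable {H : Type} [Ring H] [HopfAlgebra k H]
variable {B M : Type} [Ring B] [Algebra k B] [AddCommGroup M] [Module k M]

/-- the `i`-th coface of the cocyclic module `C^n_H(B, M) = Hom^H(B^{⊗(n+1)}, M)` of a left
`H`-comodule algebra `B`; `i = n+1` is the twisted last coface
`(δ_{n+1} f)(b₀ ⊗ ⋯ ⊗ b_{n+1}) = f(b_{n+1}₍₀₎ b₀ ⊗ b₁ ⊗ ⋯ ⊗ bₙ) · b_{n+1}₍₋₁₎`. -/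
def faceCB (ρB : B →ₗ[k] H ⊗[k] B) (act : M ⊗[k] H →ₗ[k] M) (n i : ℕ)
    (f : (Tpow k B (n+1) : Type) →ₗ[k] M) : (Tpow k B (n+2) : Type) →ₗ[k] M :=
  if i = n+1 then
    act ∘ₗ cmm k H M ∘ₗ ((f ∘ₗ merge k (LinearMap.mul' k B) n 0).lTensor H)
      ∘ₗ rotρL k ρB (n+1)
  else f ∘ₗ merge k (LinearMap.mul' k B) n i

/-- the `i`-th codegeneracy of `C^n_H(B, M)`. -/
def degCB (n i : ℕ) (f : (Tpow k B (n+2) : Type) →ₗ[k] M) :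
    (Tpow k B (n+1) : Type) →ₗ[k] M :=
  f ∘ₗ ins k (1 : B) n i

/-- the Hochschild coboundary of `C^n_H(B, M)`. -/
def bCB (ρB : B →ₗ[k] H ⊗[k] B) (act : M ⊗[k] H →ₗ[k] M) (n : ℕ)
    (f : (Tpow k B (n+1) : Type) →ₗ[k] M) : (Tpow k B (n+2) : Type) →ₗ[k] M :=
  ∑ i ∈ Finset.range (n+2), ((-1 : ℤ)^i) • faceCB k ρB act n i f

end ComodAlgSide
section PsiSec
variable {H : Type} [Ring H] [HopfAlgebra k H]
variable {A B M : Type} [AddCommGroup A] [Module k A] [AddCommGroup B] [Module k B]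
  [AddCommGroup M] [Module k M]

/-- the auxiliary "unzipping" map `(A ⊗ B)^{⊗ n} → H ⊗ (A^{⊗ n} ⊗ B^{⊗ n})` underlying the
cup-product map `Ψ`:
`(a₀ ⊗ b₀) ⊗ ⋯ ⊗ (aₙ ⊗ bₙ) ↦ b₀₍₋₁₎ ⋯ bₙ₍₋₁₎ ⊗
  ((S⁻¹(b₀₍₋₁₎ ⋯ bₙ₍₋₁₎)·a₀ ⊗ S⁻¹(b₁₍₋₁₎ ⋯ bₙ₍₋₁₎)·a₁ ⊗ ⋯) ⊗ (b₀₍₀₎ ⊗ ⋯ ⊗ bₙ₍₀₎))`. -/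
def Gmap (β : H ⊗[k] A →ₗ[k] A) (Sinv : H →ₗ[k] H) (ρB : B →ₗ[k] H ⊗[k] B) :
    ∀ n : ℕ, (Tpow k (A ⊗[k] B) n : Type) →ₗ[k]
      H ⊗[k] ((Tpow k A n : Type) ⊗[k] (Tpow k B n : Type))
  | 0 => (TensorProduct.mk k H (k ⊗[k] k) 1) ∘ₗ ((TensorProduct.mk k k k).flip 1)
  | n+1 =>
    letI TA : Type := (Tpow k A n : Type)
    letI TB : Type := (Tpow k B n : Type)
    letI inner : (H ⊗[k] (A ⊗[k] B)) ⊗[k] (H ⊗[k] (TA ⊗[k] TB)) →ₗ[k]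
        (A ⊗[k] TA) ⊗[k] (B ⊗[k] TB) :=
      (((β.rTensor TA) ∘ₗ ascs k H A TA).rTensor (B ⊗[k] TB))
        ∘ₗ ascs k H (A ⊗[k] TA) (B ⊗[k] TB)
        ∘ₗ ((mid4 k A B TA TB).lTensor H)
        ∘ₗ ((Sinv ∘ₗ LinearMap.mul' k H).rTensor ((A ⊗[k] B) ⊗[k] (TA ⊗[k] TB)))
        ∘ₗ mid4 k H (A ⊗[k] B) H (TA ⊗[k] TB)
    (inner.lTensor H)
      ∘ₗ ((LinearMap.mul' k H).rTensor
            ((H ⊗[k] (A ⊗[k] B)) ⊗[k] (H ⊗[k] (TA ⊗[k] TB))))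
      ∘ₗ mid4 k H (H ⊗[k] (A ⊗[k] B)) H (H ⊗[k] (TA ⊗[k] TB))
      ∘ₗ (TensorProduct.map
            (((TensorProduct.leftComm k A H B).toLinearMap.lTensor H)
              ∘ₗ (TensorProduct.leftComm k A H (H ⊗[k] B)).toLinearMap)
            (asc k H H (TA ⊗[k] TB)))
      ∘ₗ ((((Coalgebra.comul (R := k) (A := H)).rTensor (TA ⊗[k] TB)).lTensor
            (A ⊗[k] (H ⊗[k] (H ⊗[k] B)))))
      ∘ₗ ((((ρB.lTensor H ∘ₗ ρB).lTensor A)).rTensor (H ⊗[k] (TA ⊗[k] TB)))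
      ∘ₗ ((Gmap β Sinv ρB n).lTensor (A ⊗[k] B))

/-- the cup-product cochain map
`Ψ(φ ⊗ ψ)(a₀ ⋊ b₀ ⊗ ⋯ ⊗ aₙ ⋊ bₙ)
  = φ(ψ(b₀₍₀₎ ⊗ ⋯ ⊗ bₙ₍₀₎) ⊗ S⁻¹(b₀₍₋₁₎ ⋯ bₙ₍₋₁₎)·a₀ ⊗ ⋯ ⊗ S⁻¹(bₙ₍₋₁₎)·aₙ)`. -/
def Psi (β : H ⊗[k] A →ₗ[k] A) (Sinv : H →ₗ[k] H) (ρB : B →ₗ[k] H ⊗[k] B) (n : ℕ)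
    (φ : (M ⊗[k] (Tpow k A (n+1) : Type)) →ₗ[k] k)
    (ψ : (Tpow k B (n+1) : Type) →ₗ[k] M) :
    (Tpow k (A ⊗[k] B) (n+1) : Type) →ₗ[k] k :=
  φ ∘ₗ cmm k (Tpow k A (n+1) : Type) M
    ∘ₗ (ψ.lTensor (Tpow k A (n+1) : Type))
    ∘ₗ (TensorProduct.lid k ((Tpow k A (n+1) : Type) ⊗[k] (Tpow k B (n+1) : Type))).toLinearMap
    ∘ₗ ((Coalgebra.counit (R := k) (A := H)).rTensor
          ((Tpow k A (n+1) : Type) ⊗[k] (Tpow k B (n+1) : Type)))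
    ∘ₗ Gmap k β Sinv ρB (n+1)

end PsiSec

section Casts
variable {R : Type} [AddCommGroup R] [Module k R]

/-- transport along an equality of tensor-power indices. -/
def tcast (R : Type) [AddCommGroup R] [Module k R] {m n : ℕ} (e : m = n) :
    (Tpow k R m : Type) →ₗ[k] (Tpow k R n : Type) := by
  subst e; exact LinearMap.id

end Casts

section Iterates
variable {H : Type} [Ring H] [HopfAlgebra k H]

/-- iterated last coface on the HKRS complex `C^•_H(A,M)`, lifting a `p`-cochain to a
`(p+q)`-cochain (one factor of the Alexander--Whitney map). -/
def iterLastMA {A M : Type} [Ring A] [Algebra k A] [AddCommGroup M] [Module k M]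
    (β : H ⊗[k] A →ₗ[k] A) (Sinv : H →ₗ[k] H) (ρM : M →ₗ[k] H ⊗[k] M) (p : ℕ) :
    ∀ q : ℕ, ((M ⊗[k] (Tpow k A (p+1) : Type)) →ₗ[k] k) →
      ((M ⊗[k] (Tpow k A (p+q+1) : Type)) →ₗ[k] k)
  | 0, φ => φ
  | q+1, φ => faceMA k β Sinv ρM (p+q) (p+q+1) (iterLastMA β Sinv ρM p q φ)

/-- iterated zeroth coface on the complex `C^•_H(B,M)`, lifting a `q`-cochain to a
`(q+p)`-cochain (the other factor of the Alexander--Whitney map). -/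
def iterFace0CB {B M : Type} [Ring B] [Algebra k B] [AddCommGroup M] [Module k M]
    (ρB : B →ₗ[k] H ⊗[k] B) (act : M ⊗[k] H →ₗ[k] M) (q : ℕ) :
    ∀ p : ℕ, ((Tpow k B (q+1) : Type) →ₗ[k] M) → ((Tpow k B (q+p+1) : Type) →ₗ[k] M)
  | 0, ψ => ψ
  | p+1, ψ => faceCB k ρB act (q+p) 0 (iterFace0CB ρB act q p ψ)

/-- the cup product `⊔ = Ψ ∘ AW` of a `p`-cochain of `C^•_H(A,M)` and a `q`-cochain of
`C^•_H(B,M)`, a `(p+q)`-cochain of the cyclic complex of `A ⋊ B`. -/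
def cupAW {A B M : Type} [Ring A] [Algebra k A] [Ring B] [Algebra k B]
    [AddCommGroup M] [Module k M]
    (β : H ⊗[k] A →ₗ[k] A) (Sinv : H →ₗ[k] H) (ρB : B →ₗ[k] H ⊗[k] B)
    (ρM : M →ₗ[k] H ⊗[k] M) (act : M ⊗[k] H →ₗ[k] M) (p q : ℕ)
    (φ : (M ⊗[k] (Tpow k A (p+1) : Type)) →ₗ[k] k)
    (ψ : (Tpow k B (q+1) : Type) →ₗ[k] M) :
    (Tpow k (A ⊗[k] B) (p+q+1) : Type) →ₗ[k] k :=
  Psi k β Sinv ρB (p+q) (iterLastMA k β Sinv ρM p q φ)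
    ((iterFace0CB k ρB act q p ψ) ∘ₗ tcast k B (show p+q+1 = q+p+1 by omega))

end Iterates


section Toolkit
variable {k}
variable {X Y Z W X' Y' Z' W' : Type}
  [AddCommGroup X] [Module k X] [AddCommGroup Y] [Module k Y]
  [AddCommGroup Z] [Module k Z] [AddCommGroup W] [Module k W]
  [AddCommGroup X'] [Module k X'] [AddCommGroup Y'] [Module k Y']
  [AddCommGroup Z'] [Module k Z'] [AddCommGroup W'] [Module k W']

lemma cmm_nat (f : X →ₗ[k] X') (g : Y →ₗ[k] Y') :
    cmm k X' Y' ∘ₗ TensorProduct.map f g = TensorProduct.map g f ∘ₗ cmm k X Y := by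
  ext x y; rfl

lemma asc_nat (f : X →ₗ[k] X') (g : Y →ₗ[k] Y') (h : Z →ₗ[k] Z') :
    asc k X' Y' Z' ∘ₗ TensorProduct.map (TensorProduct.map f g) h
      = TensorProduct.map f (TensorProduct.map g h) ∘ₗ asc k X Y Z := by
  ext x y z; rfl

lemma ascs_nat (f : X →ₗ[k] X') (g : Y →ₗ[k] Y') (h : Z →ₗ[k] Z') :
    ascs k X' Y' Z' ∘ₗ TensorProduct.map f (TensorProduct.map g h)
      = TensorProduct.map (TensorProduct.map f g) h ∘ₗ ascs k X Y Z := by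
  ext x y z; rfl

lemma mid4_nat (f : X →ₗ[k] X') (g : Y →ₗ[k] Y') (h : Z →ₗ[k] Z') (l : W →ₗ[k] W') :
    mid4 k X' Y' Z' W' ∘ₗ TensorProduct.map (TensorProduct.map f g) (TensorProduct.map h l)
      = TensorProduct.map (TensorProduct.map f h) (TensorProduct.map g l)
        ∘ₗ mid4 k X Y Z W := by
  ext x y z w; rfl

/-- generic shuffle `x ⊗ (y ⊗ z) ↦ (z ⊗ x) ⊗ y`. -/
def sh2 (X Y Z : Type) [AddCommGroup X] [Module k X] [AddCommGroup Y] [Module k Y]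
    [AddCommGroup Z] [Module k Z] : X ⊗[k] (Y ⊗[k] Z) →ₗ[k] (Z ⊗[k] X) ⊗[k] Y :=
  cmm k Y (Z ⊗[k] X) ∘ₗ asc k Y Z X ∘ₗ cmm k X (Y ⊗[k] Z)

@[simp] lemma sh2_tmul (x : X) (y : Y) (z : Z) :
    sh2 X Y Z (x ⊗ₜ[k] (y ⊗ₜ[k] z)) = (z ⊗ₜ[k] x) ⊗ₜ[k] y := rfl

lemma sh2_nat (f : Z →ₗ[k] Z') (g : X →ₗ[k] X') :
    ((TensorProduct.map f g).rTensor Y) ∘ₗ sh2 X Y Z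
      = sh2 X' Y Z' ∘ₗ TensorProduct.map g (f.lTensor Y) := by
  ext x y z; rfl

/-- leftComm as linear map : `x ⊗ (y ⊗ z) ↦ y ⊗ (x ⊗ z)`. -/
def lcm (X Y Z : Type) [AddCommGroup X] [Module k X] [AddCommGroup Y] [Module k Y]
    [AddCommGroup Z] [Module k Z] : X ⊗[k] (Y ⊗[k] Z) →ₗ[k] Y ⊗[k] (X ⊗[k] Z) :=
  (TensorProduct.leftComm k X Y Z).toLinearMap

@[simp] lemma lcm_tmul (x : X) (y : Y) (z : Z) :
    lcm X Y Z (x ⊗ₜ[k] (y ⊗ₜ[k] z)) = y ⊗ₜ[k] (x ⊗ₜ[k] z) := rfl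

lemma cmm_cmm : cmm k Y X ∘ₗ cmm k X Y = LinearMap.id := by
  ext x y; rfl

lemma lT_cmm (f : X →ₗ[k] X') :
    (LinearMap.lTensor Y f) ∘ₗ cmm k X Y = cmm k X' Y ∘ₗ (f.rTensor Y) := by
  ext x y; rfl

lemma lcm_nat (g : Z →ₗ[k] Z') :
    ((g.lTensor X).lTensor Y) ∘ₗ lcm X Y Z = lcm X Y Z' ∘ₗ ((g.lTensor Y).lTensor X) := by
  ext x y z; rfl

end Toolkit

section PartI
variable {k}
variable {H A W M : Type} [Ring H] [Algebra k H]
  [AddCommGroup A] [Module k A] [AddCommGroup W] [Module k W] [AddCommGroup M] [Module k M]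

/-- pull a map applied in the second slot out of a `map`. -/
lemma lT_map {X Y Y' Y'' : Type} [AddCommMonoid X] [Module k X] [AddCommMonoid Y] [Module k Y]
    [AddCommMonoid Y'] [Module k Y'] [AddCommMonoid Y''] [Module k Y'']
    {X₀ : Type} [AddCommMonoid X₀] [Module k X₀]
    (g : X₀ →ₗ[k] X) (f : Y →ₗ[k] Y') (F : Y' →ₗ[k] Y'') :
    (F.lTensor X) ∘ₗ (TensorProduct.map g f) = TensorProduct.map g (F ∘ₗ f) := by
  ext x y; rfl

variable (μ : H ⊗[k] H →ₗ[k] H) (Δ : H →ₗ[k] H ⊗[k] H)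
  (ρA : A →ₗ[k] H ⊗[k] A) (ρW : W →ₗ[k] H ⊗[k] W)
  (act : M ⊗[k] H →ₗ[k] M) (φ : (A ⊗[k] W) →ₗ[k] M)

private lemma pC1 (f : A →ₗ[k] H ⊗[k] A) :
    ((act ∘ₗ cmm k H M ∘ₗ (φ.lTensor H) ∘ₗ asc k H A W ∘ₗ cmm k W (H ⊗[k] A)
        ∘ₗ (f.lTensor W)).lTensor H) ∘ₗ (μ.rTensor (W ⊗[k] A)) ∘ₗ mid4 k H W H A
      = ((act ∘ₗ cmm k H M ∘ₗ (φ.lTensor H) ∘ₗ asc k H A W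
            ∘ₗ cmm k W (H ⊗[k] A)).lTensor H)
          ∘ₗ (μ.rTensor (W ⊗[k] (H ⊗[k] A))) ∘ₗ mid4 k H W H (H ⊗[k] A)
          ∘ₗ ((f.lTensor H).lTensor (H ⊗[k] W)) := by
  ext h w g a; rfl

private lemma pC3 :
    (((act ∘ₗ cmm k H M ∘ₗ (φ.lTensor H) ∘ₗ asc k H A W
          ∘ₗ cmm k W (H ⊗[k] A)).lTensor H)
        ∘ₗ (μ.rTensor (W ⊗[k] (H ⊗[k] A))) ∘ₗ mid4 k H W H (H ⊗[k] A))
      ∘ₗ ((asc k H H A).lTensor (H ⊗[k] W))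
    = (((act ∘ₗ cmm k H M).lTensor H) ∘ₗ ((φ.lTensor H).lTensor H)
          ∘ₗ asc k H H (A ⊗[k] W))
        ∘ₗ ((muL k μ).rTensor (A ⊗[k] W))
        ∘ₗ mid4 k (H ⊗[k] H) A H W ∘ₗ cmm k (H ⊗[k] W) ((H ⊗[k] H) ⊗[k] A) := by
  ext h w g g' a; rfl

private lemma pC5 :
    (((act ∘ₗ cmm k H M).lTensor H) ∘ₗ ((φ.lTensor H).lTensor H)
          ∘ₗ asc k H H (A ⊗[k] W))
        ∘ₗ ((muR k μ).rTensor (A ⊗[k] W))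
        ∘ₗ mid4 k (H ⊗[k] H) A H W ∘ₗ cmm k (H ⊗[k] W) ((H ⊗[k] H) ⊗[k] A)
    = ((act.lTensor H) ∘ₗ asc k H M H)
        ∘ₗ ((φ.lTensor H).rTensor H)
        ∘ₗ ((μ.rTensor (A ⊗[k] W)).rTensor H)
        ∘ₗ ((mid4 k H A H W).rTensor H)
        ∘ₗ sh2 (H ⊗[k] W) H (H ⊗[k] A)
        ∘ₗ ((asc k H H A).lTensor (H ⊗[k] W)) := by
  ext h w g g' a; rfl

private lemma pC6 :
    ((act.lTensor H) ∘ₗ asc k H M H)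
        ∘ₗ ((φ.lTensor H).rTensor H)
        ∘ₗ ((μ.rTensor (A ⊗[k] W)).rTensor H)
        ∘ₗ ((mid4 k H A H W).rTensor H)
        ∘ₗ ((TensorProduct.map ρA ρW).rTensor H)
      = ((act.lTensor H) ∘ₗ asc k H M H)
          ∘ₗ (((φ.lTensor H) ∘ₗ diagL k μ ρA ρW).rTensor H) := by
  simp only [diagL, LinearMap.rTensor_comp, LinearMap.comp_assoc]

private lemma pC7 :
    ((act.lTensor H) ∘ₗ asc k H M H)
        ∘ₗ ((trivL k H M ∘ₗ φ).rTensor H) ∘ₗ sh2 W H A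
      = trivL k H M ∘ₗ act ∘ₗ cmm k H M ∘ₗ (φ.lTensor H) ∘ₗ asc k H A W
          ∘ₗ cmm k W (H ⊗[k] A) := by
  ext w h a; rfl

private lemma map_lT {X Y Y' Y'' : Type} [AddCommGroup X] [Module k X] [AddCommGroup Y]
    [Module k Y] [AddCommGroup Y'] [Module k Y'] [AddCommGroup Y''] [Module k Y'']
    {X' : Type} [AddCommGroup X'] [Module k X']
    (g : X →ₗ[k] X') (f : Y →ₗ[k] Y') (F : Y' →ₗ[k] Y'') :
    (TensorProduct.map g F) ∘ₗ (f.lTensor X) = TensorProduct.map g (F ∘ₗ f) := by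
  ext x y; rfl

lemma partI_aux
    (hco : ρA.lTensor H ∘ₗ ρA = asc k H H A ∘ₗ (Δ.rTensor A) ∘ₗ ρA)
    (hc : CocommCondL k μ Δ ρA ρW)
    (hφ : trivL k H M ∘ₗ φ = φ.lTensor H ∘ₗ diagL k μ ρA ρW) :
    trivL k H M ∘ₗ act ∘ₗ cmm k H M ∘ₗ (φ.lTensor H) ∘ₗ asc k H A W
        ∘ₗ cmm k W (H ⊗[k] A) ∘ₗ (ρA.lTensor W)
      = ((act ∘ₗ cmm k H M ∘ₗ (φ.lTensor H) ∘ₗ asc k H A W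
            ∘ₗ cmm k W (H ⊗[k] A) ∘ₗ (ρA.lTensor W)).lTensor H)
          ∘ₗ diagL k μ ρW ρA := by
  have hc' := hc
  simp only [CocommCondL] at hc'
  apply LinearMap.ext; intro t
  simp only [comp_apply, diagL]
  -- step 1 : pull the inner ρA out
  have e1 := LinearMap.congr_fun (pC1 μ act φ ρA) (TensorProduct.map ρW ρA t)
  simp only [comp_apply] at e1
  rw [e1]
  have e2 := LinearMap.congr_fun (lT_map ρW ρA (ρA.lTensor H)) t
  simp only [comp_apply] at e2
  rw [e2, hco]
  -- reorganize to reach the cocommutativity pattern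
  have e3 := LinearMap.congr_fun (lT_map ρW ((Δ.rTensor A) ∘ₗ ρA) (asc k H H A)) t
  simp only [comp_apply] at e3
  rw [← e3]
  have e4 := LinearMap.congr_fun (pC3 μ act φ) (TensorProduct.map ρW ((Δ.rTensor A) ∘ₗ ρA) t)
  simp only [comp_apply] at e4
  rw [e4]
  have e5 := LinearMap.congr_fun (cmm_nat ρW ((Δ.rTensor A) ∘ₗ ρA)) t
  simp only [comp_apply] at e5
  rw [e5]
  -- apply cocommutativity
  have e6 := LinearMap.congr_fun hc' (cmm k W A t)
  simp only [comp_apply] at e6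
  rw [e6, ← e5]
  -- back
  have e7 := LinearMap.congr_fun (pC5 μ act φ) (TensorProduct.map ρW ((Δ.rTensor A) ∘ₗ ρA) t)
  simp only [comp_apply] at e7
  rw [e7, e3, ← hco]
  have e8 := LinearMap.congr_fun (map_lT ρW ρA (ρA.lTensor H)) t
  simp only [comp_apply] at e8
  rw [← e8]
  have e9 := LinearMap.congr_fun (sh2_nat ρA ρW) ((ρA.lTensor W) t)
  simp only [comp_apply] at e9
  rw [← e9]
  have e10 := LinearMap.congr_fun (pC6 μ ρA ρW act φ) (sh2 W H A ((ρA.lTensor W) t))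
  simp only [comp_apply] at e10
  rw [e10, ← hφ]
  have e11 := LinearMap.congr_fun (pC7 act φ) ((ρA.lTensor W) t)
  simp only [comp_apply] at e11
  rw [e11]

end PartI

section ECsec
variable {k}
variable {H : Type} [Ring H] [Algebra k H]

lemma rT_map {X X' X'' Y Y' : Type} [AddCommMonoid X] [Module k X] [AddCommMonoid X']
    [Module k X'] [AddCommMonoid X''] [Module k X''] [AddCommMonoid Y] [Module k Y]
    [AddCommMonoid Y'] [Module k Y'] (f : X →ₗ[k] X') (g : Y →ₗ[k] Y') (F : X' →ₗ[k] X'') :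
    (F.rTensor Y') ∘ₗ (TensorProduct.map f g) = TensorProduct.map (F ∘ₗ f) g := by
  ext x y; rfl

lemma lT_rT {X X' Y Y' : Type} [AddCommMonoid X] [Module k X] [AddCommMonoid X']
    [Module k X'] [AddCommMonoid Y] [Module k Y] [AddCommMonoid Y'] [Module k Y']
    (f : X →ₗ[k] X') (g : Y →ₗ[k] Y') :
    (g.lTensor X') ∘ₗ (f.rTensor Y) = TensorProduct.map f g := by
  ext x y; rfl

variable {X Y Z Y' : Type} [AddCommGroup X] [Module k X] [AddCommGroup Y] [Module k Y]
  [AddCommGroup Z] [Module k Z] [AddCommGroup Y'] [Module k Y']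

private lemma pSnd (f : Y →ₗ[k] Y') (μ : H ⊗[k] H →ₗ[k] H) :
    (μ.rTensor (X ⊗[k] Y')) ∘ₗ mid4 k H X H Y' ∘ₗ ((f.lTensor H).lTensor (H ⊗[k] X))
      = ((f.lTensor X).lTensor H) ∘ₗ (μ.rTensor (X ⊗[k] Y)) ∘ₗ mid4 k H X H Y := by
  ext h x g y; rfl

lemma diagL_snd (μ : H ⊗[k] H →ₗ[k] H) (ρX : X →ₗ[k] H ⊗[k] X) (ρY : Y →ₗ[k] H ⊗[k] Y)
    (ρY' : Y' →ₗ[k] H ⊗[k] Y') (f : Y →ₗ[k] Y')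
    (hf : ρY' ∘ₗ f = (f.lTensor H) ∘ₗ ρY) :
    diagL k μ ρX ρY' ∘ₗ (f.lTensor X) = ((f.lTensor X).lTensor H) ∘ₗ diagL k μ ρX ρY := by
  apply LinearMap.ext; intro t
  simp only [comp_apply, diagL]
  have e1 := LinearMap.congr_fun (map_lT ρX f ρY') t
  simp only [comp_apply] at e1
  rw [e1, hf]
  have e2 := LinearMap.congr_fun (lT_map ρX ρY (f.lTensor H)) t
  simp only [comp_apply] at e2
  rw [← e2]
  have e3 := LinearMap.congr_fun (pSnd f μ) (TensorProduct.map ρX ρY t)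
  simp only [comp_apply] at e3
  rw [e3]

private lemma pDA :
    ((ascs k X Y Z).lTensor H) ∘ₗ ((mul' k H).rTensor (X ⊗[k] (Y ⊗[k] Z)))
        ∘ₗ mid4 k H X H (Y ⊗[k] Z)
        ∘ₗ ((((mul' k H).rTensor (Y ⊗[k] Z)) ∘ₗ mid4 k H Y H Z).lTensor (H ⊗[k] X))
      = ((mul' k H).rTensor ((X ⊗[k] Y) ⊗[k] Z)) ∘ₗ mid4 k H (X ⊗[k] Y) H Z
          ∘ₗ ((((mul' k H).rTensor (X ⊗[k] Y)) ∘ₗ mid4 k H X H Y).rTensor (H ⊗[k] Z))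
          ∘ₗ ascs k (H ⊗[k] X) (H ⊗[k] Y) (H ⊗[k] Z) := by
  ext h x g y l z
  simp [LinearMap.mul'_apply, mul_assoc]

lemma diagL_assoc (ρX : X →ₗ[k] H ⊗[k] X) (ρY : Y →ₗ[k] H ⊗[k] Y) (ρZ : Z →ₗ[k] H ⊗[k] Z) :
    ((ascs k X Y Z).lTensor H) ∘ₗ diagL k (mul' k H) ρX (diagL k (mul' k H) ρY ρZ)
      = diagL k (mul' k H) (diagL k (mul' k H) ρX ρY) ρZ ∘ₗ ascs k X Y Z := by
  apply LinearMap.ext; intro t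
  simp only [comp_apply, diagL]
  have e1 := LinearMap.congr_fun
    (lT_map ρX (TensorProduct.map ρY ρZ)
      (((mul' k H).rTensor (Y ⊗[k] Z)) ∘ₗ mid4 k H Y H Z)) t
  simp only [comp_apply] at e1
  rw [LinearMap.comp_assoc] at e1
  have e2 := LinearMap.congr_fun (ascs_nat ρX ρY ρZ) t
  simp only [comp_apply] at e2
  have e3 := LinearMap.congr_fun
    (rT_map (TensorProduct.map ρX ρY) ρZ
      (((mul' k H).rTensor (X ⊗[k] Y)) ∘ₗ mid4 k H X H Y)) ((ascs k X Y Z) t)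
  simp only [comp_apply] at e3
  rw [LinearMap.comp_assoc] at e3
  have e4 := LinearMap.congr_fun (pDA (X := X) (Y := Y) (Z := Z))
    (TensorProduct.map ρX (TensorProduct.map ρY ρZ) t)
  simp only [comp_apply] at e4
  rw [e1, e2, e3] at e4
  exact e4

end ECsec

attribute [reducible] Tpow

section ECmain
variable {k}
variable {H A : Type} [Ring H] [Algebra k H] [AddCommGroup A] [Module k A]
variable (ρA : A →ₗ[k] H ⊗[k] A)

private lemma pEC0a :
    ((cmm k A k).lTensor H) ∘ₗ ((mul' k H).rTensor (A ⊗[k] k)) ∘ₗ mid4 k H A H k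
        ∘ₗ ((trivL k H k).lTensor (H ⊗[k] A))
      = ((mul' k H).rTensor (k ⊗[k] A)) ∘ₗ mid4 k H k H A
          ∘ₗ (TensorProduct.map (trivL k H k) LinearMap.id)
          ∘ₗ cmm k (H ⊗[k] A) k := by
  ext h a c
  simp [trivL, LinearMap.mul'_apply]

private lemma pEC0b :
    TensorProduct.map (trivL k H k) ρA ∘ₗ cmm k A k
      = TensorProduct.map (trivL k H k) LinearMap.id ∘ₗ cmm k (H ⊗[k] A) k
          ∘ₗ (ρA.rTensor k) := by
  ext a c; rfl

lemma EC (n : ℕ) :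
    (((epow k A n).toLinearMap).lTensor H) ∘ₗ TpowρL k (mul' k H) ρA (n+1)
      = diagL k (mul' k H) (TpowρL k (mul' k H) ρA n) ρA ∘ₗ (epow k A n).toLinearMap := by
  induction n with
  | zero =>
    apply LinearMap.ext; intro t
    show (LinearMap.lTensor H (cmm k A k)) ((diagL k (mul' k H) ρA (trivL k H k)) t)
      = (diagL k (mul' k H) (trivL k H k) ρA) ((cmm k A k) t)
    simp only [comp_apply, diagL]
    have e1 := LinearMap.congr_fun (lT_rT ρA (trivL k H k)) t
    simp only [comp_apply] at e1
    rw [← e1]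
    have e2 := LinearMap.congr_fun (pEC0a (A := A)) ((ρA.rTensor k) t)
    simp only [comp_apply] at e2
    rw [e2]
    have e3 := LinearMap.congr_fun (pEC0b ρA) t
    simp only [comp_apply] at e3
    rw [e3]
  | succ n ih =>
    have ih' : diagL k (mul' k H) (TpowρL k (mul' k H) ρA n) ρA ∘ₗ (epow k A n).toLinearMap
        = ((epow k A n).toLinearMap.lTensor H)
            ∘ₗ diagL k (mul' k H) ρA (TpowρL k (mul' k H) ρA n) := ih.symm
    apply LinearMap.ext; intro t
    show (LinearMap.lTensor H
        (ascs k A (Tpow k A n : Type) A ∘ₗ ((epow k A n).toLinearMap.lTensor A)))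
        ((diagL k (mul' k H) ρA
          (diagL k (mul' k H) ρA (TpowρL k (mul' k H) ρA n))) t)
      = (diagL k (mul' k H) (diagL k (mul' k H) ρA (TpowρL k (mul' k H) ρA n)) ρA)
          ((ascs k A (Tpow k A n : Type) A) (((epow k A n).toLinearMap.lTensor A) t))
    rw [LinearMap.lTensor_comp]
    simp only [comp_apply]
    have e1 := LinearMap.congr_fun
      (diagL_snd (mul' k H) ρA (diagL k (mul' k H) ρA (TpowρL k (mul' k H) ρA n))
        (diagL k (mul' k H) (TpowρL k (mul' k H) ρA n) ρA) (epow k A n).toLinearMap ih') t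
    simp only [comp_apply] at e1
    have e2 := LinearMap.congr_fun
      (diagL_assoc ρA (TpowρL k (mul' k H) ρA n) ρA)
      (((epow k A n).toLinearMap.lTensor A) t)
    simp only [comp_apply] at e2
    exact (congrArg (LinearMap.lTensor H (ascs k A (Tpow k A n : Type) A)) e1.symm).trans e2

end ECmain

section PartII
variable {k}
variable {H A M : Type} [Ring H] [HopfAlgebra k H]
  [AddCommGroup A] [Module k A] [AddCommGroup M] [Module k M]

lemma comp2_tail {α β β₁ β₂ γ : Type} [AddCommGroup α] [Module k α] [AddCommGroup β]
    [Module k β] [AddCommGroup β₁] [Module k β₁] [AddCommGroup β₂] [Module k β₂]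
    [AddCommGroup γ] [Module k γ] {f₁ : β₁ →ₗ[k] γ} {f₂ : β →ₗ[k] β₁} {g₁ : β₂ →ₗ[k] γ}
    {g₂ : β →ₗ[k] β₂} (e : f₁ ∘ₗ f₂ = g₁ ∘ₗ g₂) (h : α →ₗ[k] β) :
    f₁ ∘ₗ (f₂ ∘ₗ h) = g₁ ∘ₗ (g₂ ∘ₗ h) := by
  rw [← LinearMap.comp_assoc, e, LinearMap.comp_assoc]

lemma lT_merge (N : Type) [AddCommGroup N] [Module k N] {α β γ δ : Type} [AddCommGroup α]
    [Module k α] [AddCommGroup β] [Module k β] [AddCommGroup γ] [Module k γ]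
    [AddCommGroup δ] [Module k δ] (f : γ →ₗ[k] δ) (g : β →ₗ[k] γ)
    (h : α →ₗ[k] N ⊗[k] β) :
    (LinearMap.lTensor N f) ∘ₗ ((LinearMap.lTensor N g) ∘ₗ h)
      = (LinearMap.lTensor N (f ∘ₗ g)) ∘ₗ h := by
  rw [← LinearMap.comp_assoc, ← LinearMap.lTensor_comp]

/-- swap the two first factors of `A ⊗ (A ⊗ X)`. -/
def swp (X : Type) [AddCommGroup X] [Module k X] :
    A ⊗[k] (A ⊗[k] X) →ₗ[k] A ⊗[k] (A ⊗[k] X) :=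
  asc k A A X ∘ₗ ((cmm k A A).rTensor X) ∘ₗ ascs k A A X

@[simp] lemma swp_tmul {X : Type} [AddCommGroup X] [Module k X] (a b : A) (x : X) :
    swp X (a ⊗ₜ[k] (b ⊗ₜ[k] x)) = b ⊗ₜ[k] (a ⊗ₜ[k] x) := rfl

lemma swp_nat {X X' : Type} [AddCommGroup X] [Module k X] [AddCommGroup X'] [Module k X']
    (f : X →ₗ[k] X') :
    (LinearMap.lTensor A (f.lTensor A)) ∘ₗ swp X
      = swp X' ∘ₗ (LinearMap.lTensor A (f.lTensor A)) := by
  ext a b x; rfl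

/-- multiplication map used in iterating the cyclic operator. -/
def wm (X : Type) [AddCommGroup X] [Module k X] :
    H ⊗[k] (H ⊗[k] X) →ₗ[k] H ⊗[k] X :=
  ((opMul k H (mul' k H)).rTensor X) ∘ₗ ascs k H H X

variable (ρA : A →ₗ[k] H ⊗[k] A) (act : M ⊗[k] H →ₗ[k] M)

/-- insertion of the first factor into position `m` (junk for `m > n`). -/
def insAt : ℕ → (n : ℕ) → (A ⊗[k] (Tpow k A n : Type)) →ₗ[k] (A ⊗[k] (Tpow k A n : Type))
  | 0, _ => LinearMap.id
  | _+1, 0 => LinearMap.id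
  | m+1, n+1 => (LinearMap.lTensor A (insAt m n)) ∘ₗ swp (Tpow k A n : Type)

/-- the `m`-fold iterated rotation-coaction. -/
def RRm : ℕ → (n : ℕ) → (Tpow k A (n+1) : Type) →ₗ[k] H ⊗[k] (Tpow k A (n+1) : Type)
  | 0, n => TensorProduct.mk k H (Tpow k A (n+1) : Type) 1
  | m+1, n => wm (Tpow k A (n+1) : Type) ∘ₗ (LinearMap.lTensor H (rotρL k ρA n)) ∘ₗ RRm m n

private lemma pR1b (X : Type) [AddCommGroup X] [Module k X] :
    (LinearMap.lTensor (A ⊗[k] X) ρA) ∘ₗ ascs k A X A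
      = ascs k A X (H ⊗[k] A) ∘ₗ (LinearMap.lTensor A (LinearMap.lTensor X ρA)) := by
  ext a x c; rfl

private lemma pR1struct (X : Type) [AddCommGroup X] [Module k X] :
    asc k H A (A ⊗[k] X) ∘ₗ cmm k (A ⊗[k] X) (H ⊗[k] A) ∘ₗ ascs k A X (H ⊗[k] A)
      = (LinearMap.lTensor H (swp X)) ∘ₗ lcm A H (A ⊗[k] X)
          ∘ₗ (LinearMap.lTensor A (asc k H A X))
          ∘ₗ (LinearMap.lTensor A (cmm k X (H ⊗[k] A))) := by
  ext a x h c; rfl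

lemma R1cons (n : ℕ) :
    rotρL k ρA (n+1)
      = (LinearMap.lTensor H (swp (Tpow k A n : Type)))
          ∘ₗ lcm A H (Tpow k A (n+1) : Type)
          ∘ₗ (LinearMap.lTensor A (rotρL k ρA n)) := by
  apply LinearMap.ext; intro t
  show (asc k H A (A ⊗[k] (Tpow k A n : Type)))
      ((cmm k (A ⊗[k] (Tpow k A n : Type)) (H ⊗[k] A))
        ((LinearMap.lTensor (A ⊗[k] (Tpow k A n : Type)) ρA)
          ((ascs k A (Tpow k A n : Type) A)
            ((LinearMap.lTensor A (epow k A n).toLinearMap) t))))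
    = (LinearMap.lTensor H (swp (Tpow k A n : Type)))
        ((lcm A H (A ⊗[k] (Tpow k A n : Type)))
          ((LinearMap.lTensor A (rotρL k ρA n)) t))
  simp only [rotρL, LinearMap.lTensor_comp, comp_apply]
  have e1 := LinearMap.congr_fun (pR1b (A := A) (H := H) ρA (Tpow k A n : Type))
    ((LinearMap.lTensor A (epow k A n).toLinearMap) t)
  simp only [comp_apply] at e1
  rw [e1]
  have e2 := LinearMap.congr_fun (pR1struct (A := A) (H := H) (Tpow k A n : Type))
    ((LinearMap.lTensor A (LinearMap.lTensor (Tpow k A n : Type) ρA))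
      ((LinearMap.lTensor A (epow k A n).toLinearMap) t))
  simp only [comp_apply] at e2
  rw [e2]

private lemma pGOS (V : Type) [AddCommGroup V] [Module k V]
    (ι : A ⊗[k] V →ₗ[k] A ⊗[k] V) :
    (LinearMap.lTensor H (swp (A ⊗[k] V)))
        ∘ₗ lcm A H (A ⊗[k] (A ⊗[k] V))
        ∘ₗ (LinearMap.lTensor A (LinearMap.lTensor H (LinearMap.lTensor A ι)))
        ∘ₗ (LinearMap.lTensor A (LinearMap.lTensor H (swp V)))
        ∘ₗ (LinearMap.lTensor A (lcm A H (A ⊗[k] V)))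
        ∘ₗ swp (H ⊗[k] (A ⊗[k] V))
      = (LinearMap.lTensor H (LinearMap.lTensor A (LinearMap.lTensor A ι)))
          ∘ₗ (LinearMap.lTensor H (LinearMap.lTensor A (swp V)))
          ∘ₗ (LinearMap.lTensor H (swp (A ⊗[k] V)))
          ∘ₗ lcm A H (A ⊗[k] (A ⊗[k] V))
          ∘ₗ (LinearMap.lTensor A (LinearMap.lTensor H (swp V)))
          ∘ₗ (LinearMap.lTensor A (lcm A H (A ⊗[k] V))) := by
  ext a b h c v; rfl

lemma oneStep (m : ℕ) : ∀ n : ℕ, m ≤ n →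
    rotρL k ρA (n+1) ∘ₗ insAt (A := A) m (n+1)
      = (LinearMap.lTensor H (insAt (m+1) (n+1)))
          ∘ₗ lcm A H (Tpow k A (n+1) : Type)
          ∘ₗ (LinearMap.lTensor A (rotρL k ρA n)) := by
  induction m with
  | zero =>
    intro n _
    have h0 : insAt (k := k) (A := A) 0 (n+1) = LinearMap.id := rfl
    have h1 : insAt (k := k) (A := A) (0+1) (n+1)
        = (LinearMap.lTensor A (insAt (k := k) (A := A) 0 n))
            ∘ₗ swp (k := k) (A := A) (Tpow k A n : Type) := rfl
    rw [h0, LinearMap.comp_id, h1, show insAt (k := k) (A := A) 0 n = LinearMap.id from rfl,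
      LinearMap.lTensor_id, LinearMap.id_comp]
    exact R1cons ρA n
  | succ m ih =>
    intro n hn
    cases n with
    | zero => exact absurd hn (by omega)
    | succ n' =>
      have hm : m ≤ n' := Nat.succ_le_succ_iff.mp hn
      rw [show insAt (A := A) (m+1) (n'+1+1)
          = (LinearMap.lTensor A (insAt (A := A) m (n'+1)))
              ∘ₗ swp (Tpow k A (n'+1) : Type) from rfl]
      rw [R1cons ρA (n'+1)]
      simp only [LinearMap.comp_assoc]
      rw [lT_merge A (rotρL k ρA (n'+1)) (insAt (A := A) m (n'+1)), ih n' hm]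
      rw [show insAt (A := A) (m+1+1) (n'+1+1)
          = (LinearMap.lTensor A (insAt (A := A) (m+1) (n'+1)))
              ∘ₗ swp (Tpow k A (n'+1) : Type) from rfl]
      rw [show insAt (A := A) (m+1) (n'+1)
          = (LinearMap.lTensor A (insAt (A := A) m n'))
              ∘ₗ swp (Tpow k A n' : Type) from rfl]
      rw [R1cons ρA n']
      simp only [LinearMap.lTensor_comp, LinearMap.comp_assoc]
      rw [swp_nat (A := A) (rotρL k ρA n')]
      have e := congrArg
        (fun q => q ∘ₗ (LinearMap.lTensor A (LinearMap.lTensor A (rotρL k ρA n'))))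
        (pGOS (H := H) (Tpow k A n' : Type) (insAt (A := A) m n'))
      simp only [LinearMap.comp_assoc] at e
      exact e

private lemma pGBS (X : Type) [AddCommGroup X] [Module k X]
    (ι : A ⊗[k] X →ₗ[k] A ⊗[k] X) :
    wm (A ⊗[k] X)
        ∘ₗ (LinearMap.lTensor H (LinearMap.lTensor H ι))
        ∘ₗ (LinearMap.lTensor H (lcm A H X))
        ∘ₗ lcm A H (H ⊗[k] X)
      = (LinearMap.lTensor H ι) ∘ₗ lcm A H X ∘ₗ (LinearMap.lTensor A (wm X)) := by
  ext a h h' x; rfl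

lemma block (m : ℕ) : ∀ n : ℕ, m ≤ n+1 →
    RRm ρA m (n+1)
      = (LinearMap.lTensor H (insAt (A := A) m (n+1)))
          ∘ₗ lcm A H (Tpow k A (n+1) : Type)
          ∘ₗ (LinearMap.lTensor A (RRm ρA m n)) := by
  induction m with
  | zero =>
    intro n _
    refine TensorProduct.ext' fun a z => ?_
    show (1 : H) ⊗ₜ[k] (a ⊗ₜ[k] z)
      = (LinearMap.lTensor H (insAt (A := A) 0 (n+1)))
          ((lcm A H (A ⊗[k] (Tpow k A n : Type))) (a ⊗ₜ[k] ((1 : H) ⊗ₜ[k] z)))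
    rw [lcm_tmul, show insAt (A := A) 0 (n+1) = LinearMap.id from rfl, LinearMap.lTensor_id]
    rfl
  | succ m ih =>
    intro n hn
    have hm1 : m ≤ n + 1 := Nat.le_of_succ_le hn
    have hm : m ≤ n := Nat.succ_le_succ_iff.mp hn
    rw [show RRm ρA (m+1) (n+1)
        = wm (Tpow k A (n+1+1) : Type) ∘ₗ (LinearMap.lTensor H (rotρL k ρA (n+1)))
            ∘ₗ RRm ρA m (n+1) from rfl]
    rw [show RRm ρA (m+1) n
        = wm (Tpow k A (n+1) : Type) ∘ₗ (LinearMap.lTensor H (rotρL k ρA n))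
            ∘ₗ RRm ρA m n from rfl]
    rw [ih n hm1]
    try simp only [LinearMap.comp_assoc]
    rw [lT_merge H (rotρL k ρA (n+1)) (insAt (A := A) m (n+1)), oneStep ρA m n hm]
    simp only [LinearMap.lTensor_comp, LinearMap.comp_assoc]
    rw [show (LinearMap.lTensor H (LinearMap.lTensor A (rotρL k ρA n)))
          ∘ₗ lcm A H (Tpow k A (n+1) : Type) ∘ₗ (LinearMap.lTensor A (RRm ρA m n))
        = lcm A H (H ⊗[k] (Tpow k A (n+1) : Type))
            ∘ₗ (LinearMap.lTensor A (LinearMap.lTensor H (rotρL k ρA n)))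
            ∘ₗ (LinearMap.lTensor A (RRm ρA m n)) from by
      rw [← LinearMap.comp_assoc, lcm_nat (X := A) (Y := H) (rotρL k ρA n),
        LinearMap.comp_assoc]]
    have e := congrArg
      (fun q => q ∘ₗ ((LinearMap.lTensor A (LinearMap.lTensor H (rotρL k ρA n)))
        ∘ₗ (LinearMap.lTensor A (RRm ρA m n))))
      (pGBS (Tpow k A (n+1) : Type) (insAt (A := A) (m+1) (n+1)))
    simp only [LinearMap.comp_assoc] at e
    exact e

lemma ins_last : ∀ n : ℕ, insAt (A := A) n n
    = (epow k A n).symm.toLinearMap ∘ₗ cmm k A (Tpow k A n : Type)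
  | 0 => by
    refine TensorProduct.ext' fun a c => rfl
  | n+1 => by
    have hi : insAt (A := A) (n+1) (n+1)
        = (LinearMap.lTensor A (insAt (A := A) n n)) ∘ₗ swp (Tpow k A n : Type) := rfl
    rw [hi, ins_last n]
    ext a b y
    rfl

lemma boundary (n : ℕ) :
    rotρL k ρA (n+1) ∘ₗ insAt (A := A) (n+1) (n+1)
      = asc k H A (Tpow k A (n+1) : Type) ∘ₗ (ρA.rTensor (Tpow k A (n+1) : Type)) := by
  rw [ins_last (n+1)]
  apply LinearMap.ext; intro t
  show (asc k H A (Tpow k A (n+1) : Type))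
      ((cmm k (Tpow k A (n+1) : Type) (H ⊗[k] A))
        ((LinearMap.lTensor (Tpow k A (n+1) : Type) ρA)
          ((epow k A (n+1)).toLinearMap
            ((epow k A (n+1)).symm.toLinearMap
              ((cmm k A (Tpow k A (n+1) : Type)) t)))))
    = (asc k H A (Tpow k A (n+1) : Type)) ((ρA.rTensor (Tpow k A (n+1) : Type)) t)
  have hsymm : (epow k A (n+1)).toLinearMap
      ((epow k A (n+1)).symm.toLinearMap ((cmm k A (Tpow k A (n+1) : Type)) t))
      = (cmm k A (Tpow k A (n+1) : Type)) t :=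
    (epow k A (n+1)).apply_symm_apply _
  rw [hsymm]
  have e1 := LinearMap.congr_fun (lT_cmm (Y := (Tpow k A (n+1) : Type)) ρA) t
  simp only [comp_apply] at e1
  rw [e1]
  have e2 := LinearMap.congr_fun
    (cmm_cmm (X := H ⊗[k] A) (Y := (Tpow k A (n+1) : Type)))
    ((ρA.rTensor (Tpow k A (n+1) : Type)) t)
  simp only [comp_apply, LinearMap.id_coe, id_eq] at e2
  rw [e2]

end PartII

section PartIIb
variable {k}
variable {H A M : Type} [Ring H] [HopfAlgebra k H]
  [AddCommGroup A] [Module k A] [AddCommGroup M] [Module k M]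
variable (ρA : A →ₗ[k] H ⊗[k] A) (act : M ⊗[k] H →ₗ[k] M)

lemma rT_lT {X X' Y Y' : Type} [AddCommGroup X] [Module k X] [AddCommGroup X']
    [Module k X'] [AddCommGroup Y] [Module k Y] [AddCommGroup Y'] [Module k Y']
    (f : X →ₗ[k] X') (g : Y →ₗ[k] Y') :
    (f.rTensor Y') ∘ₗ (g.lTensor X) = TensorProduct.map f g := by
  ext x y; rfl

private lemma pGFS1 (Y : Type) [AddCommGroup Y] [Module k Y] :
    (LinearMap.lTensor H (ρA.rTensor Y)) ∘ₗ lcm A H Y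
      = lcm (H ⊗[k] A) H Y ∘ₗ (ρA.rTensor (H ⊗[k] Y)) := by
  ext a h y; rfl

private lemma pGFS2 (Y : Type) [AddCommGroup Y] [Module k Y] :
    wm (A ⊗[k] Y) ∘ₗ (LinearMap.lTensor H (asc k H A Y)) ∘ₗ lcm (H ⊗[k] A) H Y
      = ((mul' k H).rTensor (A ⊗[k] Y)) ∘ₗ mid4 k H A H Y := by
  ext h a g y; rfl

lemma GFS (Y : Type) [AddCommGroup Y] [Module k Y] (ρ₂ : Y →ₗ[k] H ⊗[k] Y) :
    wm (A ⊗[k] Y) ∘ₗ (LinearMap.lTensor H (asc k H A Y ∘ₗ (ρA.rTensor Y)))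
        ∘ₗ lcm A H Y ∘ₗ (LinearMap.lTensor A ρ₂)
      = diagL k (mul' k H) ρA ρ₂ := by
  apply LinearMap.ext; intro t
  simp only [comp_apply, diagL, LinearMap.lTensor_comp]
  have e1 := LinearMap.congr_fun (pGFS1 ρA Y) ((LinearMap.lTensor A ρ₂) t)
  simp only [comp_apply] at e1
  rw [e1]
  have e2 := LinearMap.congr_fun (rT_lT ρA ρ₂) t
  simp only [comp_apply] at e2
  rw [e2]
  have e3 := LinearMap.congr_fun (pGFS2 (A := A) Y) (TensorProduct.map ρA ρ₂ t)
  simp only [comp_apply] at e3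
  rw [e3]

private lemma mk1_nat {X Y : Type} [AddCommGroup X] [Module k X] [AddCommGroup Y]
    [Module k Y] (f : X →ₗ[k] Y) :
    (LinearMap.lTensor H f) ∘ₗ TensorProduct.mk k H X 1
      = TensorProduct.mk k H Y 1 ∘ₗ f := by
  apply LinearMap.ext; intro x; rfl

private lemma wm_mk1 (X : Type) [AddCommGroup X] [Module k X] :
    wm (H := H) X ∘ₗ TensorProduct.mk k H (H ⊗[k] X) 1 = LinearMap.id := by
  refine TensorProduct.ext' fun h x => ?_
  show (mul' k H) ((cmm k H H) ((1 : H) ⊗ₜ[k] h)) ⊗ₜ[k] x = h ⊗ₜ[k] x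
  have : (mul' k H) ((cmm k H H) ((1 : H) ⊗ₜ[k] h)) = h * 1 := rfl
  rw [this, mul_one]

private lemma pS0c2 :
    asc k H A k ∘ₗ cmm k k (H ⊗[k] A) ∘ₗ cmm k (H ⊗[k] A) k
      = ((mul' k H).rTensor (A ⊗[k] k)) ∘ₗ mid4 k H A H k
          ∘ₗ ((trivL k H k).lTensor (H ⊗[k] A)) := by
  ext h a c
  simp [trivL, LinearMap.mul'_apply]

private lemma rot0 : rotρL k ρA 0 = diagL k (mul' k H) ρA (trivL k H k) := by
  have h1 : rotρL k ρA 0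
      = asc k H A (Tpow k A 0 : Type) ∘ₗ cmm k (Tpow k A 0 : Type) (H ⊗[k] A)
          ∘ₗ cmm k (H ⊗[k] A) (Tpow k A 0 : Type)
          ∘ₗ (ρA.rTensor (Tpow k A 0 : Type)) := by
    show asc k H A (Tpow k A 0 : Type) ∘ₗ cmm k (Tpow k A 0 : Type) (H ⊗[k] A)
        ∘ₗ (LinearMap.lTensor (Tpow k A 0 : Type) ρA)
        ∘ₗ cmm k A (Tpow k A 0 : Type) = _
    rw [lT_cmm]
  have e := congrArg (fun q => q ∘ₗ (ρA.rTensor (Tpow k A 0 : Type))) (pS0c2 (A := A) (H := H))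
  simp only [LinearMap.comp_assoc] at e
  have h2 : diagL k (mul' k H) ρA (trivL k H k)
      = ((mul' k H).rTensor (A ⊗[k] k)) ∘ₗ mid4 k H A H k
          ∘ₗ ((trivL k H k).lTensor (H ⊗[k] A)) ∘ₗ (ρA.rTensor k) := by
    show ((mul' k H).rTensor (A ⊗[k] k)) ∘ₗ mid4 k H A H k
        ∘ₗ TensorProduct.map ρA (trivL k H k) = _
    rw [show ((trivL k H k).lTensor (H ⊗[k] A)) ∘ₗ (ρA.rTensor k)
        = TensorProduct.map ρA (trivL k H k) from lT_rT ρA (trivL k H k)]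
  exact h1.trans (e.trans h2.symm)

lemma RR_full (n : ℕ) :
    RRm ρA (n+1) n = TpowρL k (mul' k H) ρA (n+1) := by
  induction n with
  | zero =>
    apply LinearMap.ext; intro t
    have h1 : RRm ρA (0+1) 0 t
        = wm (Tpow k A (0+1) : Type)
            ((LinearMap.lTensor H (rotρL k ρA 0))
              (TensorProduct.mk k H (Tpow k A (0+1) : Type) 1 t)) := rfl
    rw [h1]
    have h2 := LinearMap.congr_fun (mk1_nat (H := H) (rotρL k ρA 0)) t
    simp only [comp_apply] at h2
    rw [h2]
    have h3 := LinearMap.congr_fun (wm_mk1 (H := H) (Tpow k A (0+1) : Type)) (rotρL k ρA 0 t)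
    simp only [comp_apply, LinearMap.id_coe, id_eq] at h3
    rw [h3]
    exact LinearMap.congr_fun (rot0 ρA) t
  | succ n ihs =>
    rw [show RRm ρA (n+1+1) (n+1)
        = wm (Tpow k A (n+1+1) : Type) ∘ₗ (LinearMap.lTensor H (rotρL k ρA (n+1)))
            ∘ₗ RRm ρA (n+1) (n+1) from rfl]
    rw [block ρA (n+1) n (le_refl (n+1)), ihs]
    try simp only [LinearMap.comp_assoc]
    rw [lT_merge H (rotρL k ρA (n+1)) (insAt (A := A) (n+1) (n+1)), boundary ρA n]
    have e := GFS ρA (Tpow k A (n+1) : Type) (TpowρL k (mul' k H) ρA (n+1))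
    simp only [LinearMap.comp_assoc] at e
    exact e

private lemma pACT (hact : IsRAct k act) {X : Type} [AddCommGroup X] [Module k X]
    (φ : X →ₗ[k] M) :
    act ∘ₗ cmm k H M ∘ₗ (LinearMap.lTensor H (act ∘ₗ cmm k H M))
        ∘ₗ (LinearMap.lTensor H (LinearMap.lTensor H φ))
      = act ∘ₗ cmm k H M ∘ₗ (LinearMap.lTensor H φ) ∘ₗ wm X := by
  refine TensorProduct.ext' fun h z => ?_
  induction z using TensorProduct.induction_on with
  | zero => simp
  | tmul g x =>
    show act (act (φ x ⊗ₜ[k] g) ⊗ₜ[k] h)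
      = act ((φ x) ⊗ₜ[k] ((mul' k H) ((cmm k H H) (h ⊗ₜ[k] g))))
    have : (mul' k H) ((cmm k H H) (h ⊗ₜ[k] g)) = g * h := rfl
    rw [this]
    exact hact.2 (φ x) g h
  | add u v hu hv => simp only [tmul_add, map_add, hu, hv]

private lemma stab0 (hact : IsRAct k act) (X : Type) [AddCommGroup X] [Module k X]
    (φ : X →ₗ[k] M) :
    act ∘ₗ cmm k H M ∘ₗ (LinearMap.lTensor H φ) ∘ₗ TensorProduct.mk k H X 1 = φ := by
  apply LinearMap.ext; intro x
  show act (φ x ⊗ₜ[k] (1 : H)) = φ x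
  exact hact.1 (φ x)

lemma tau_iter (hact : IsRAct k act) (n : ℕ) :
    ∀ (m : ℕ) (φ : (Tpow k A (n+1) : Type) →ₗ[k] M),
    (tauL k ρA act n)^[m] φ
      = act ∘ₗ cmm k H M ∘ₗ (φ.lTensor H) ∘ₗ RRm ρA m n
  | 0, φ => by
    rw [Function.iterate_zero_apply]
    exact (stab0 act hact (Tpow k A (n+1) : Type) φ).symm
  | m+1, φ => by
    rw [Function.iterate_succ_apply, tau_iter hact n m (tauL k ρA act n φ)]
    apply LinearMap.ext; intro t
    simp only [comp_apply, tauL, LinearMap.lTensor_comp]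
    have e1 := LinearMap.congr_fun (pACT act hact φ)
      ((LinearMap.lTensor H (rotρL k ρA n)) (RRm ρA m n t))
    simp only [comp_apply, LinearMap.lTensor_comp] at e1
    rw [e1]
    rfl

end PartIIb

/-- If `H` coacts cocommutatively on the left `H`-comodule algebra `A`,
then any right `H`-module `M` with the trivial left coaction `m ↦ 1 ⊗ m` is an `^A H`-HCC:
the cyclic operator preserves `H`-colinearity and the operators make
`Hom^H(A^{⊗(n+1)}, M)` a cocyclic module. -/
theorem stmt6 (k H A M : Type) [Field k] [Ring H] [HopfAlgebra k H] [Ring A] [Algebra k A]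
    [AddCommGroup M] [Module k M]
    (ρA : A →ₗ[k] H ⊗[k] A) (hA : IsComodAlgL k ρA)
    (act : M ⊗[k] H →ₗ[k] M) (hact : IsRAct k act)
    (hcocomm : ∀ n : ℕ,
      CocommCondL k (LinearMap.mul' k H) (Coalgebra.comul (R := k)) ρA
        (TpowρL k (LinearMap.mul' k H) ρA n)) :
    IsAHHCCL k ρA (trivL k H M) act := by
  intro n φ hφ
  have hφ' : trivL k H M ∘ₗ φ
      = φ.lTensor H ∘ₗ TpowρL k (LinearMap.mul' k H) ρA (n+1) := hφ
  constructor
  · -- colinearity of the cyclic operator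
    show trivL k H M ∘ₗ tauL k ρA act n φ
      = (tauL k ρA act n φ).lTensor H ∘ₗ TpowρL k (LinearMap.mul' k H) ρA (n+1)
    have hφ'' : trivL k H M ∘ₗ φ
        = φ.lTensor H ∘ₗ diagL k (LinearMap.mul' k H) ρA
            (TpowρL k (LinearMap.mul' k H) ρA n) := hφ
    have key := partI_aux (LinearMap.mul' k H) (Coalgebra.comul (R := k) (A := H)) ρA
      (TpowρL k (LinearMap.mul' k H) ρA n) act φ hA.1 (hcocomm n) hφ''
    apply LinearMap.ext; intro t
    have e1 := LinearMap.congr_fun key ((epow k A n).toLinearMap t)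
    simp only [comp_apply] at e1
    have e2 := LinearMap.congr_fun (EC ρA n) t
    simp only [comp_apply] at e2
    rw [← e2] at e1
    have e3 := LinearMap.congr_fun
      ((LinearMap.lTensor_comp H
        (act ∘ₗ cmm k H M ∘ₗ (φ.lTensor H) ∘ₗ asc k H A (Tpow k A n : Type)
          ∘ₗ cmm k (Tpow k A n : Type) (H ⊗[k] A) ∘ₗ (ρA.lTensor (Tpow k A n : Type)))
        (epow k A n).toLinearMap).symm)
      (TpowρL k (LinearMap.mul' k H) ρA (n+1) t)
    simp only [comp_apply] at e3
    rw [e3] at e1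
    exact e1
  · -- τ^{n+1} = id
    rw [tau_iter ρA act hact n (n+1) φ, RR_full ρA n, ← hφ']
    apply LinearMap.ext; intro x
    show act (φ x ⊗ₜ[k] (1 : H)) = φ x
    exact hact.1 (φ x)

end HCN
end
end

section
/- Let H = F ⋈ U be a bicrossed product Hopf algebra of a matched pair (F, U) where F is cocommutative, with F a right H-comodule algebra via f ↦ f⁽¹⁾ ⊗ (f⁽²⁾ ⋈ 1_U). Then any right H-module M endowed with the trivial H-coaction is a ^F H-SAYD module. -/
open TensorProduct LinearMap

noncomputable section
namespace HCN

variable (k : Type) [Field k]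

section Stmt8Proof

set_option synthInstance.maxHeartbeats 1000000
set_option maxHeartbeats 1600000

variable {k F U M : Type} [Field k] [Ring F] [HopfAlgebra k F] [Ring U] [HopfAlgebra k U]
  [AddCommGroup M] [Module k M]

lemma antipode_one8 {A : Type} [Ring A] [HopfAlgebra k A] :
    HopfAlgebra.antipode (R := k) (A := A) 1 = 1 := by
  have h := HopfAlgebra.mul_antipode_rTensor_comul_apply (R := k) (A := A) 1
  rw [Bialgebra.comul_one, Algebra.TensorProduct.one_def] at h
  simpa using h

lemma jF_apply8 (f : F) : jF k F U f = f ⊗ₜ[k] (1 : U) := rfl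

lemma bmul_jF8 (α : U ⊗[k] F →ₗ[k] F) (hα1 : ∀ f : F, α ((1:U) ⊗ₜ[k] f) = f) (x y : F) :
    bmul k α ((x ⊗ₜ[k] (1:U)) ⊗ₜ[k] (y ⊗ₜ[k] (1:U))) = (x * y) ⊗ₜ[k] (1:U) := by
  simp [bmul, Bialgebra.comul_one, Algebra.TensorProduct.one_def, hα1]

lemma bcomul_jF8 (ρU : U →ₗ[k] U ⊗[k] F) (hρU1 : ρU 1 = (1:U) ⊗ₜ[k] (1:F)) (f : F) :
    bcomul k ρU (f ⊗ₜ[k] (1:U))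
      = TensorProduct.map (jF k F U) (jF k F U) (Coalgebra.comul (R := k) f) := by
  simp only [bcomul, LinearMap.coe_comp, Function.comp_apply, TensorProduct.map_tmul,
    Bialgebra.comul_one, Algebra.TensorProduct.one_def]
  generalize (Coalgebra.comul (R := k) f) = t
  induction t using TensorProduct.induction_on with
  | zero => simp
  | tmul x y => simp [hρU1, opMul, jF_apply8]
  | add a b ha hb => simp only [TensorProduct.add_tmul, map_add, ha, hb]

lemma bS_jF8 (α : U ⊗[k] F →ₗ[k] F) (hα1 : ∀ f : F, α ((1:U) ⊗ₜ[k] f) = f)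
    (ρU : U →ₗ[k] U ⊗[k] F) (hρU1 : ρU 1 = (1:U) ⊗ₜ[k] (1:F)) (f : F) :
    bS k α ρU (f ⊗ₜ[k] (1:U))
      = (HopfAlgebra.antipode (R := k) f) ⊗ₜ[k] (1:U) := by
  simp only [bS, LinearMap.coe_comp, Function.comp_apply, LinearMap.lTensor_tmul, hρU1,
    LinearEquiv.coe_coe, TensorProduct.comm_tmul, TensorProduct.assoc_tmul,
    TensorProduct.map_tmul, opMul, LinearMap.mul'_apply, antipode_one8, jF_apply8, jU,
    TensorProduct.mk_apply, one_mul, mul_one]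
  simpa using bmul_jF8 α hα1 1 (HopfAlgebra.antipode (R := k) f)

lemma key_twist8 (α : U ⊗[k] F →ₗ[k] F) (hα1 : ∀ f : F, α ((1:U) ⊗ₜ[k] f) = f)
    (ρU : U →ₗ[k] U ⊗[k] F) (hρU1 : ρU 1 = (1:U) ⊗ₜ[k] (1:F))
    (hFcc : cmm k F F ∘ₗ (Coalgebra.comul (R := k) (A := F))
      = Coalgebra.comul (R := k) (A := F))
    (act : M ⊗[k] (F ⊗[k] U) →ₗ[k] M) (m : M) (f : F) :
    TwistR k (bmul k α) (bcomul k ρU) (bS k α ρU) act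
        ((m ⊗ₜ[k] (1 : F ⊗[k] U)) ⊗ₜ[k] (f ⊗ₜ[k] (1:U)))
      = act (m ⊗ₜ[k] (f ⊗ₜ[k] (1:U))) ⊗ₜ[k] (1 : F ⊗[k] U) := by
  have h1H : (1 : F ⊗[k] U) = (1:F) ⊗ₜ[k] (1:U) := Algebra.TensorProduct.one_def
  have hcc : ∀ x : F, (TensorProduct.comm k F F) (Coalgebra.comul (R := k) x)
      = Coalgebra.comul (R := k) x := fun x => by
    simpa using LinearMap.congr_fun hFcc x
  obtain ⟨s, hs⟩ := TensorProduct.exists_finset (R := k) (Coalgebra.comul (R := k) f)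
  let r : F × F → (p : F × F) → Coalgebra.Repr k p.1 (F × F) := fun _ p => Coalgebra.Repr.arbitrary k p.1
  -- a representation of the second comultiplication, with inner legs cocommuted
  have e1 : (Coalgebra.comul (R := k) (A := F)).lTensor F (Coalgebra.comul (R := k) f)
      = ∑ p ∈ s, ∑ j ∈ (r p p).index,
          (r p p).left j ⊗ₜ[k] ((r p p).right j ⊗ₜ[k] p.2) := by
    rw [← Coalgebra.coassoc_apply, hs]
    simp only [map_sum, LinearMap.rTensor_tmul]
    refine Finset.sum_congr rfl fun p _ => ?_
    rw [← (r p p).eq]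
    simp [TensorProduct.sum_tmul]
  have e2 : (Coalgebra.comul (R := k) (A := F)).lTensor F (Coalgebra.comul (R := k) f)
      = ∑ p ∈ s, ∑ j ∈ (r p p).index,
          (r p p).left j ⊗ₜ[k] (p.2 ⊗ₜ[k] (r p p).right j) := by
    have e3 : LinearMap.lTensor F (cmm k F F)
        ((Coalgebra.comul (R := k) (A := F)).lTensor F (Coalgebra.comul (R := k) f))
        = (Coalgebra.comul (R := k) (A := F)).lTensor F (Coalgebra.comul (R := k) f) := by
      rw [hs]
      simp only [map_sum, LinearMap.lTensor_tmul]
      refine Finset.sum_congr rfl fun p _ => ?_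
      simp only [LinearEquiv.coe_coe]
      rw [hcc]
    rw [← e3, e1]
    simp [map_sum]
  have hD2 : (bcomul k ρU).lTensor (F ⊗[k] U) (bcomul k ρU (f ⊗ₜ[k] (1:U)))
      = ∑ p ∈ s, ∑ j ∈ (r p p).index,
          ((r p p).left j ⊗ₜ[k] (1:U)) ⊗ₜ[k]
            ((p.2 ⊗ₜ[k] (1:U)) ⊗ₜ[k] ((r p p).right j ⊗ₜ[k] (1:U))) := by
    rw [bcomul_jF8 ρU hρU1 f]
    have hnat : ∀ t : F ⊗[k] F, (bcomul k ρU).lTensor (F ⊗[k] U)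
        (TensorProduct.map (jF k F U) (jF k F U) t)
        = TensorProduct.map (jF k F U) (TensorProduct.map (jF k F U) (jF k F U))
            ((Coalgebra.comul (R := k) (A := F)).lTensor F t) := by
      intro t
      induction t using TensorProduct.induction_on with
      | zero => simp
      | tmul x y => simp [jF_apply8, bcomul_jF8 ρU hρU1]
      | add a b ha hb => simp only [map_add, ha, hb]
    rw [hnat, e2]
    simp [jF_apply8]
  have hant : ∀ p : F × F, ∑ j ∈ (r p p).index,
      (HopfAlgebra.antipode (R := k) ((r p p).right j)) * (r p p).left j
      = algebraMap k F (Coalgebra.counit (R := k) p.1) :=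
    fun p => HopfAlgebra.sum_antipode_mul_eq_algebraMap_counit
      (repr := { index := (r p p).index, left := (r p p).right, right := (r p p).left,
                 eq := by
                   rw [← hcc p.1, ← (r p p).eq]
                   simp [map_sum] })
  have hcounit : ∑ p ∈ s, Coalgebra.counit (R := k) p.1 • p.2 = f := by
    have h := Coalgebra.rTensor_counit_comul (R := k) f
    rw [hs] at h
    simp only [map_sum, LinearMap.rTensor_tmul] at h
    have h2 := congrArg (TensorProduct.lid k F) h
    simpa [map_sum] using h2
  -- now compute
  rw [TwistR, Twist]
  simp only [LinearMap.coe_comp, Function.comp_apply, LinearEquiv.coe_coe,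
    TensorProduct.comm_tmul, LinearMap.lTensor_tmul, LinearMap.rTensor_tmul]
  rw [hD2]
  simp only [TensorProduct.sum_tmul, map_sum, h1H]
  simp only [LinearMap.coe_comp, Function.comp_apply, LinearEquiv.coe_coe,
    TensorProduct.tensorTensorTensorComm_tmul, LinearMap.rTensor_tmul,
    LinearMap.lTensor_tmul, TensorProduct.assoc_tmul, TensorProduct.assoc_symm_tmul,
    TensorProduct.comm_tmul, TensorProduct.map_tmul, opMul,
    bmul_jF8 α hα1, bS_jF8 α hα1 ρU hρU1, one_mul, mul_one]
  have main : ∀ p ∈ s, ∑ j ∈ (r p p).index,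
      act (m ⊗ₜ[k] (p.2 ⊗ₜ[k] (1:U))) ⊗ₜ[k]
        ((HopfAlgebra.antipode (R := k) ((r p p).right j) * (r p p).left j) ⊗ₜ[k] (1:U))
      = act (m ⊗ₜ[k] ((Coalgebra.counit (R := k) p.1 • p.2) ⊗ₜ[k] (1:U)))
          ⊗ₜ[k] ((1:F) ⊗ₜ[k] (1:U)) := by
    intro p _
    rw [← TensorProduct.tmul_sum, ← TensorProduct.sum_tmul, hant p,
      Algebra.algebraMap_eq_smul_one]
    simp only [← TensorProduct.smul_tmul', TensorProduct.tmul_smul, map_smul]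
  rw [Finset.sum_congr rfl main, ← TensorProduct.sum_tmul, ← map_sum,
    ← TensorProduct.tmul_sum, ← TensorProduct.sum_tmul, hcounit]

end Stmt8Proof

/-- Let `H = F ⋈ U` be a bicrossed product Hopf algebra of a matched pair
`(F, U)` with `F` cocommutative, and regard `F` as a right `H`-comodule algebra via
`f ↦ f⁽¹⁾ ⊗ (f⁽²⁾ ⋈ 1)`. Then any right `H`-module `M` with the trivial coaction is a
`^F H`-SAYD module. -/
theorem stmt8 (k F U M : Type) [Field k] [Ring F] [HopfAlgebra k F] [Ring U] [HopfAlgebra k U]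
    [AddCommGroup M] [Module k M]
    (α : U ⊗[k] F →ₗ[k] F) (ρU : U →ₗ[k] U ⊗[k] F)
    (hmp : IsMatchedPair k α ρU)
    (hFcocomm : cmm k F F ∘ₗ (Coalgebra.comul (R := k) (A := F))
      = Coalgebra.comul (R := k) (A := F))
    (act : M ⊗[k] (F ⊗[k] U) →ₗ[k] M)
    (hact : IsRActμ k (bmul k α) (1 : F ⊗[k] U) act) :
    IsAHSAYDR k (bmul k α) (bcomul k ρU) (bS k α ρU)
      (bcoactF k F U) (trivR k (F ⊗[k] U) M) act := by
  obtain ⟨hα1, -, -, -, -, -, -, -, hρU1, -⟩ := hmp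
  intro n φ hφ
  constructor
  · unfold AYDcondR
    refine TensorProduct.ext' fun a w => ?_
    obtain ⟨s, hs⟩ := TensorProduct.exists_finset (R := k) (Coalgebra.comul (R := k) a)
    have hcoact : coactFirstR k (W := (Tpow k F n : Type)) (bcoactF k F U) (a ⊗ₜ[k] w)
        = ∑ p ∈ s, ((p.1 ⊗ₜ[k] w) ⊗ₜ[k] (p.2 ⊗ₜ[k] (1:U))) := by
      simp only [coactFirstR, bcoactF, LinearMap.coe_comp, Function.comp_apply,
        LinearMap.rTensor_tmul, LinearMap.lTensor_tmul, hs]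
      simp [TensorProduct.sum_tmul, jF_apply8]
    simp only [LinearMap.coe_comp, Function.comp_apply, hcoact, map_sum]
    refine Finset.sum_congr rfl fun p _ => ?_
    simp only [LinearMap.rTensor_tmul, LinearMap.coe_comp, Function.comp_apply]
    have htr : (trivR k (F ⊗[k] U) M) (φ (p.1 ⊗ₜ[k] w)) = φ (p.1 ⊗ₜ[k] w) ⊗ₜ[k] (1 : F ⊗[k] U) := rfl
    rw [htr, key_twist8 α hα1 ρU hρU1 hFcocomm act]
    rfl
  · have hφ' : (trivR k (F ⊗[k] U) M) ∘ₗ φ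
        = φ.rTensor (F ⊗[k] U) ∘ₗ TpowρR k (bmul k α) (bcoactF k F U) (n+1) := hφ
    show act ∘ₗ φ.rTensor (F ⊗[k] U) ∘ₗ TpowρR k (bmul k α) (bcoactF k F U) (n+1) = φ
    rw [← hφ']
    refine LinearMap.ext fun x => ?_
    exact (by simpa [trivR] using hact.1 (φ x) : act (φ x ⊗ₜ[k] (1 : F ⊗[k] U)) = φ x)

end HCN
end
end
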